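/- arXiv:cs/0502001 — 7 statements merged into one kernel-verified Lean document; each statement's English description precedes it below -/
import Mathlib

section
/- Let X be a general source over finite alphabet 𝒳, W a general channel with finite output alphabet 𝒴, and Y the output of W with input X. Suppose 0 < δ < I_inf(X;Y) and that ε_n(δ) > 0 for every n ≥ 1, where ε_n(δ) = Pr[(1/n)·ln(W^n(Y^n|X^n)/P_{Y^n}(Y^n)) < I_inf(X;Y) − δ]. Define ρ_n = min{ (−(1/2)·ln ε_n(δ)) / (n·(I_inf(X;Y) − δ)), 1 }. Then for every n ≥ 1, E_0^{(n)}(ρ_n, X) ≥ ρ_n·(I_inf(X;Y) − δ) − (3·ln 2)/n. -/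
open Real Filter
open scoped Classical

/-- `Pr[(1/n)·ln(Wⁿ(Yⁿ|Xⁿ)/P_{Yⁿ}(Yⁿ)) < β]` for the joint distribution
`P_{XⁿYⁿ}(xⁿ,yⁿ) = P_{Xⁿ}(xⁿ)·Wⁿ(yⁿ|xⁿ)`. -/
noncomputable def prInfDensityLT {𝒳 𝒴 : Type*} [Fintype 𝒳] [Fintype 𝒴]
    (P : (n : ℕ) → (Fin n → 𝒳) → ℝ)
    (W : (n : ℕ) → (Fin n → 𝒳) → (Fin n → 𝒴) → ℝ)
    (β : ℝ) (n : ℕ) : ℝ :=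
  ∑ x : Fin n → 𝒳, ∑ y : Fin n → 𝒴,
    if (1 / (n : ℝ)) * Real.log (W n x y / ∑ x' : Fin n → 𝒳, P n x' * W n x' y) < β
    then P n x * W n x y else 0

/-- The spectral inf-mutual information rate `I_inf(X;Y)`. -/
noncomputable def specInfMutualInfo {𝒳 𝒴 : Type*} [Fintype 𝒳] [Fintype 𝒴]
    (P : (n : ℕ) → (Fin n → 𝒳) → ℝ)
    (W : (n : ℕ) → (Fin n → 𝒳) → (Fin n → 𝒴) → ℝ) : ℝ :=
  sSup {β : ℝ | Tendsto (fun n => prInfDensityLT P W β n) atTop (nhds 0)}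

/-- Gallager's function `E₀⁽ⁿ⁾(ρ, X)`. -/
noncomputable def gallagerE0 {𝒳 𝒴 : Type*} [Fintype 𝒳] [Fintype 𝒴] (n : ℕ)
    (Pn : (Fin n → 𝒳) → ℝ) (Wn : (Fin n → 𝒳) → (Fin n → 𝒴) → ℝ) (ρ : ℝ) : ℝ :=
  -(1 / (n : ℝ)) * Real.log
    (∑ y : Fin n → 𝒴, (∑ x : Fin n → 𝒳, Pn x * Wn x y ^ (1 / (1 + ρ))) ^ (1 + ρ))

lemma aux_add_rpow_le (a b p : ℝ) (ha : 0 ≤ a) (hb : 0 ≤ b) (hp : 0 ≤ p) :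
    (a + b) ^ p ≤ 2 ^ p * (a ^ p + b ^ p) := by
  have h1 : a + b ≤ 2 * max a b := by
    rcases le_total a b with h | h
    · rw [max_eq_right h]; linarith
    · rw [max_eq_left h]; linarith
  have h2 : (a + b) ^ p ≤ (2 * max a b) ^ p :=
    Real.rpow_le_rpow (by linarith) h1 hp
  have h3 : (2 * max a b) ^ p = 2 ^ p * (max a b) ^ p :=
    Real.mul_rpow (by norm_num) (le_max_of_le_left ha)
  have h4 : (max a b) ^ p ≤ a ^ p + b ^ p := by
    rcases le_total a b with h | h
    · rw [max_eq_right h]; have := Real.rpow_nonneg ha p; linarith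
    · rw [max_eq_left h]; have := Real.rpow_nonneg hb p; linarith
  calc (a + b) ^ p ≤ (2 * max a b) ^ p := h2
    _ = 2 ^ p * (max a b) ^ p := h3
    _ ≤ 2 ^ p * (a ^ p + b ^ p) := by
        apply mul_le_mul_of_nonneg_left h4 (Real.rpow_nonneg (by norm_num) p)

lemma gallager_key {𝒳 𝒴 : Type*} [Fintype 𝒳] [Fintype 𝒴]
    (n : ℕ) (Pn : (Fin n → 𝒳) → ℝ) (Wn : (Fin n → 𝒳) → (Fin n → 𝒴) → ℝ)
    (hPnn : ∀ x, 0 ≤ Pn x) (hP1 : ∑ x : Fin n → 𝒳, Pn x = 1)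
    (hWnn : ∀ x y, 0 ≤ Wn x y) (hW1 : ∀ x, ∑ y : Fin n → 𝒴, Wn x y = 1)
    (R r : ℝ) (hR : 0 < R) (hr0 : 0 ≤ r) (hr1 : r ≤ 1) (hn : 1 ≤ n)
    (ε : ℝ)
    (hεdef : ε = ∑ x : Fin n → 𝒳, ∑ y : Fin n → 𝒴,
      if (1 / (n : ℝ)) * Real.log (Wn x y / ∑ x' : Fin n → 𝒳, Pn x' * Wn x' y) < R
      then Pn x * Wn x y else 0)
    (hεe : ε ≤ Real.exp (-((n : ℝ) * r * R))) :
    ∑ y : Fin n → 𝒴, (∑ x : Fin n → 𝒳, Pn x * Wn x y ^ (1 / (1 + r))) ^ (1 + r) ≤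
      8 * Real.exp (-((n : ℝ) * r * R)) := by
  have hn0 : (0 : ℝ) < n := by
    have : (1 : ℝ) ≤ n := by exact_mod_cast hn
    linarith
  set p := 1 + r with hp
  have hp0 : 0 < p := by rw [hp]; linarith
  have hp1 : 1 ≤ p := by rw [hp]; linarith
  have hp2 : p ≤ 2 := by rw [hp]; linarith
  set q := 1 / p with hq
  have hq0 : 0 < q := by rw [hq]; positivity
  have hq1 : q ≤ 1 := by rw [hq, div_le_one hp0]; exact hp1
  have hqp : q * p = 1 := by rw [hq]; field_simp
  set Q : (Fin n → 𝒴) → ℝ := fun y => ∑ x' : Fin n → 𝒳, Pn x' * Wn x' y with hQ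
  have hQnn : ∀ y, 0 ≤ Q y :=
    fun y => Finset.sum_nonneg fun x _ => mul_nonneg (hPnn x) (hWnn x y)
  have hQsum : ∑ y : Fin n → 𝒴, Q y = 1 := by
    simp only [hQ]
    rw [Finset.sum_comm]
    simp_rw [← Finset.mul_sum, hW1, mul_one]
    exact hP1
  set A : (Fin n → 𝒴) → ℝ := fun y => ∑ x : Fin n → 𝒳,
    if (1 / (n : ℝ)) * Real.log (Wn x y / Q y) < R then Pn x * Wn x y ^ q else 0 with hA
  set B : (Fin n → 𝒴) → ℝ := fun y => ∑ x : Fin n → 𝒳,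
    if (1 / (n : ℝ)) * Real.log (Wn x y / Q y) < R then 0 else Pn x * Wn x y ^ q with hB
  have hAnn : ∀ y, 0 ≤ A y := by
    intro y
    refine Finset.sum_nonneg fun x _ => ?_
    split_ifs with h
    · exact mul_nonneg (hPnn x) (Real.rpow_nonneg (hWnn x y) q)
    · exact le_refl 0
  have hBnn : ∀ y, 0 ≤ B y := by
    intro y
    refine Finset.sum_nonneg fun x _ => ?_
    split_ifs with h
    · exact le_refl 0
    · exact mul_nonneg (hPnn x) (Real.rpow_nonneg (hWnn x y) q)
  have hsplit : ∀ y, (∑ x : Fin n → 𝒳, Pn x * Wn x y ^ q) = A y + B y := by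
    intro y
    simp only [hA, hB]
    rw [← Finset.sum_add_distrib]
    refine Finset.sum_congr rfl fun x _ => ?_
    split_ifs with h
    · rw [add_zero]
    · rw [zero_add]
  -- Bound for the "bad" part via Jensen
  have hAbound : ∀ y, A y ^ p ≤ ∑ x : Fin n → 𝒳,
      if (1 / (n : ℝ)) * Real.log (Wn x y / Q y) < R then Pn x * Wn x y else 0 := by
    intro y
    set z : (Fin n → 𝒳) → ℝ := fun x =>
      if (1 / (n : ℝ)) * Real.log (Wn x y / Q y) < R then Wn x y else 0 with hz
    have hznn : ∀ x, 0 ≤ z x := by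
      intro x; simp only [hz]; split_ifs with h
      · exact hWnn x y
      · exact le_refl 0
    have hconc : ConcaveOn ℝ (Set.Ici 0) (fun t : ℝ => t ^ q) :=
      Real.concaveOn_rpow hq0.le hq1
    have hJ := hconc.le_map_sum (t := Finset.univ) (w := Pn) (p := z)
      (fun x _ => hPnn x) hP1 (fun x _ => Set.mem_Ici.mpr (hznn x))
    have hAy : A y = ∑ x : Fin n → 𝒳, Pn x • (z x) ^ q := by
      simp only [hA, hz, smul_eq_mul]
      refine Finset.sum_congr rfl fun x _ => ?_
      split_ifs with h
      · rfl
      · rw [Real.zero_rpow (ne_of_gt hq0), mul_zero]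
    have hay : (∑ x : Fin n → 𝒳, Pn x • z x) = ∑ x : Fin n → 𝒳,
        if (1 / (n : ℝ)) * Real.log (Wn x y / Q y) < R then Pn x * Wn x y else 0 := by
      simp only [hz, smul_eq_mul]
      refine Finset.sum_congr rfl fun x _ => ?_
      split_ifs with h
      · rfl
      · rw [mul_zero]
    have haynn : 0 ≤ ∑ x : Fin n → 𝒳,
        if (1 / (n : ℝ)) * Real.log (Wn x y / Q y) < R then Pn x * Wn x y else 0 := by
      refine Finset.sum_nonneg fun x _ => ?_
      split_ifs with h
      · exact mul_nonneg (hPnn x) (hWnn x y)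
      · exact le_refl 0
    have hAle : A y ≤ (∑ x : Fin n → 𝒳,
        if (1 / (n : ℝ)) * Real.log (Wn x y / Q y) < R then Pn x * Wn x y else 0) ^ q := by
      rw [hAy]; rw [← hay]; exact hJ
    calc A y ^ p ≤ ((∑ x : Fin n → 𝒳,
          if (1 / (n : ℝ)) * Real.log (Wn x y / Q y) < R then Pn x * Wn x y else 0) ^ q) ^ p :=
          Real.rpow_le_rpow (hAnn y) hAle hp0.le
      _ = (∑ x : Fin n → 𝒳,
          if (1 / (n : ℝ)) * Real.log (Wn x y / Q y) < R then Pn x * Wn x y else 0) ^ (q * p) := by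
          rw [← Real.rpow_mul haynn]
      _ = _ := by rw [hqp, Real.rpow_one]
  have hAsum : ∑ y : Fin n → 𝒴, A y ^ p ≤ ε := by
    have hε' : ε = ∑ y : Fin n → 𝒴, ∑ x : Fin n → 𝒳,
        if (1 / (n : ℝ)) * Real.log (Wn x y / Q y) < R then Pn x * Wn x y else 0 := by
      simp only [hQ]
      rw [hεdef, Finset.sum_comm]
    rw [hε']
    exact Finset.sum_le_sum fun y _ => hAbound y
  -- Bound for the "good" part
  have hBbound : ∀ y, B y ^ p ≤ Real.exp (-((n : ℝ) * r * R)) * Q y := by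
    intro y
    by_cases hQy : Q y = 0
    · have hBy : B y = 0 := by
        simp only [hB]
        refine Finset.sum_eq_zero fun x _ => ?_
        rw [if_pos]
        rw [hQy, div_zero, Real.log_zero, mul_zero]
        exact hR
      rw [hBy, Real.zero_rpow (ne_of_gt hp0), hQy, mul_zero]
    · have hQpos : 0 < Q y := lt_of_le_of_ne (hQnn y) (Ne.symm hQy)
      set C := (Real.exp ((n : ℝ) * R) * Q y) ^ (q - 1) with hC
      have hCnn : 0 ≤ C := Real.rpow_nonneg (by positivity) _
      have hterm : ∀ x, (if (1 / (n : ℝ)) * Real.log (Wn x y / Q y) < R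
          then 0 else Pn x * Wn x y ^ q) ≤ C * (Pn x * Wn x y) := by
        intro x
        split_ifs with h
        · exact mul_nonneg hCnn (mul_nonneg (hPnn x) (hWnn x y))
        · push_neg at h
          have hW0 : 0 < Wn x y := by
            by_contra hw
            push_neg at hw
            have hW00 : Wn x y = 0 := le_antisymm hw (hWnn x y)
            rw [hW00, zero_div, Real.log_zero, mul_zero] at h
            exact absurd h (not_le.mpr hR)
          have h2 : (n : ℝ) * R ≤ Real.log (Wn x y / Q y) := by
            have h2a := mul_le_mul_of_nonneg_left h hn0.le
            calc (n : ℝ) * R ≤ (n : ℝ) * ((1 / (n : ℝ)) * Real.log (Wn x y / Q y)) := h2a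
              _ = Real.log (Wn x y / Q y) := by field_simp
          have hWge : Real.exp ((n : ℝ) * R) * Q y ≤ Wn x y := by
            have h3 : Real.exp ((n : ℝ) * R) ≤ Wn x y / Q y := by
              have h4 : Real.exp ((n : ℝ) * R) ≤ Real.exp (Real.log (Wn x y / Q y)) :=
                Real.exp_le_exp.mpr h2
              rwa [Real.exp_log (div_pos hW0 hQpos)] at h4
            calc Real.exp ((n : ℝ) * R) * Q y ≤ (Wn x y / Q y) * Q y :=
                mul_le_mul_of_nonneg_right h3 hQpos.le
              _ = Wn x y := div_mul_cancel₀ _ (ne_of_gt hQpos)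
          have h5 : Wn x y ^ (q - 1) ≤ C := by
            rw [hC]
            exact Real.rpow_le_rpow_of_nonpos (by positivity) hWge (by linarith)
          have h6 : Wn x y ^ q = Wn x y * Wn x y ^ (q - 1) := by
            rw [show q = 1 + (q - 1) by ring, Real.rpow_add hW0, Real.rpow_one]
            ring_nf
          calc Pn x * Wn x y ^ q = Pn x * (Wn x y * Wn x y ^ (q - 1)) := by rw [h6]
            _ ≤ Pn x * (Wn x y * C) := by
                apply mul_le_mul_of_nonneg_left _ (hPnn x)
                exact mul_le_mul_of_nonneg_left h5 (hWnn x y)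
            _ = C * (Pn x * Wn x y) := by ring
      have hBle : B y ≤ C * Q y := by
        calc B y ≤ ∑ x : Fin n → 𝒳, C * (Pn x * Wn x y) := by
              simp only [hB]
              exact Finset.sum_le_sum fun x _ => hterm x
          _ = C * Q y := by rw [← Finset.mul_sum]
      have hfinal : B y ^ p ≤ (C * Q y) ^ p := Real.rpow_le_rpow (hBnn y) hBle hp0.le
      have hcomp : (C * Q y) ^ p = Real.exp (-((n : ℝ) * r * R)) * Q y := by
        have hqp1 : (q - 1) * p = -r := by
          calc (q - 1) * p = q * p - p := by ring
            _ = -r := by rw [hqp, hp]; ring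
        rw [hC]
        rw [Real.mul_rpow (Real.rpow_nonneg (by positivity) _) hQpos.le]
        rw [← Real.rpow_mul (by positivity : (0:ℝ) ≤ Real.exp ((n : ℝ) * R) * Q y), hqp1]
        rw [Real.mul_rpow (Real.exp_pos _).le hQpos.le]
        rw [Real.rpow_def_of_pos (Real.exp_pos _), Real.log_exp]
        rw [mul_assoc, ← Real.rpow_add hQpos]
        rw [show -r + p = 1 by rw [hp]; ring, Real.rpow_one]
        congr 1
        ring_nf
      calc B y ^ p ≤ (C * Q y) ^ p := hfinal
        _ = _ := hcomp
  have hBsum : ∑ y : Fin n → 𝒴, B y ^ p ≤ Real.exp (-((n : ℝ) * r * R)) := by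
    calc ∑ y : Fin n → 𝒴, B y ^ p ≤ ∑ y : Fin n → 𝒴, Real.exp (-((n : ℝ) * r * R)) * Q y :=
        Finset.sum_le_sum fun y _ => hBbound y
      _ = Real.exp (-((n : ℝ) * r * R)) * ∑ y : Fin n → 𝒴, Q y := by rw [Finset.mul_sum]
      _ = _ := by rw [hQsum, mul_one]
  have h2p : (2 : ℝ) ^ p ≤ 4 := by
    calc (2 : ℝ) ^ p ≤ (2 : ℝ) ^ (2 : ℝ) :=
        Real.rpow_le_rpow_of_exponent_le one_le_two hp2
      _ = 4 := by rw [Real.rpow_two]; norm_num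
  have hsnn : 0 ≤ (∑ y : Fin n → 𝒴, A y ^ p) + ∑ y : Fin n → 𝒴, B y ^ p := by
    apply add_nonneg <;> exact Finset.sum_nonneg fun y _ => Real.rpow_nonneg (by first | exact hAnn y | exact hBnn y) p
  calc ∑ y : Fin n → 𝒴, (∑ x : Fin n → 𝒳, Pn x * Wn x y ^ q) ^ p
      = ∑ y : Fin n → 𝒴, (A y + B y) ^ p := by
        exact Finset.sum_congr rfl fun y _ => by rw [hsplit y]
    _ ≤ ∑ y : Fin n → 𝒴, 2 ^ p * (A y ^ p + B y ^ p) :=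
        Finset.sum_le_sum fun y _ => aux_add_rpow_le _ _ _ (hAnn y) (hBnn y) hp0.le
    _ = 2 ^ p * ((∑ y : Fin n → 𝒴, A y ^ p) + ∑ y : Fin n → 𝒴, B y ^ p) := by
        rw [← Finset.mul_sum, Finset.sum_add_distrib]
    _ ≤ 4 * (ε + Real.exp (-((n : ℝ) * r * R))) := by
        apply mul_le_mul h2p (add_le_add hAsum hBsum) hsnn (by norm_num)
    _ ≤ 4 * (Real.exp (-((n : ℝ) * r * R)) + Real.exp (-((n : ℝ) * r * R))) := by
        have := hεe; nlinarith [Real.exp_pos (-((n : ℝ) * r * R))]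
    _ = 8 * Real.exp (-((n : ℝ) * r * R)) := by ring

theorem gallager_channel_estimate
    {𝒳 𝒴 : Type*} [Fintype 𝒳] [Fintype 𝒴] [Nonempty 𝒳] [Nonempty 𝒴]
    (P : (n : ℕ) → (Fin n → 𝒳) → ℝ)
    (W : (n : ℕ) → (Fin n → 𝒳) → (Fin n → 𝒴) → ℝ)
    (hPnn : ∀ n x, 0 ≤ P n x) (hP1 : ∀ n, ∑ x : Fin n → 𝒳, P n x = 1)
    (hWnn : ∀ n x y, 0 ≤ W n x y) (hW1 : ∀ n x, ∑ y : Fin n → 𝒴, W n x y = 1)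
    (δ : ℝ) (hδ0 : 0 < δ) (hδ : δ < specInfMutualInfo P W)
    (ε : ℕ → ℝ)
    (hε : ∀ n, ε n = prInfDensityLT P W (specInfMutualInfo P W - δ) n)
    (hεpos : ∀ n, 1 ≤ n → 0 < ε n)
    (ρ : ℕ → ℝ)
    (hρ : ∀ n, ρ n = min ((-(1 / 2 : ℝ) * Real.log (ε n)) /
        ((n : ℝ) * (specInfMutualInfo P W - δ))) 1) :
    ∀ n, 1 ≤ n →
      gallagerE0 n (P n) (W n) (ρ n) ≥
        ρ n * (specInfMutualInfo P W - δ) - 3 * Real.log 2 / (n : ℝ) := by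
  intro n hn
  have hn0 : (0 : ℝ) < n := by
    have : (1 : ℝ) ≤ n := by exact_mod_cast hn
    linarith
  set R := specInfMutualInfo P W - δ with hRdef
  have hR0 : 0 < R := by rw [hRdef]; linarith
  have hε0 : 0 < ε n := hεpos n hn
  -- ε n ≤ 1
  have hε1 : ε n ≤ 1 := by
    rw [hε n]
    unfold prInfDensityLT
    calc (∑ x : Fin n → 𝒳, ∑ y : Fin n → 𝒴,
        if (1 / (n : ℝ)) * Real.log (W n x y / ∑ x' : Fin n → 𝒳, P n x' * W n x' y) < R
        then P n x * W n x y else 0)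
        ≤ ∑ x : Fin n → 𝒳, ∑ y : Fin n → 𝒴, P n x * W n x y := by
          refine Finset.sum_le_sum fun x _ => Finset.sum_le_sum fun y _ => ?_
          split_ifs with h
          · exact le_refl _
          · exact mul_nonneg (hPnn n x) (hWnn n x y)
      _ = 1 := by
          simp_rw [← Finset.mul_sum, hW1, mul_one]
          exact hP1 n
  have hlogε : Real.log (ε n) ≤ 0 := Real.log_nonpos hε0.le hε1
  -- bounds on ρ n
  have hr1 : ρ n ≤ 1 := by rw [hρ n]; exact min_le_right _ _
  have hr0 : 0 ≤ ρ n := by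
    rw [hρ n]
    refine le_min (div_nonneg (by nlinarith) (by positivity)) zero_le_one
  have hra : ρ n ≤ (-(1 / 2 : ℝ) * Real.log (ε n)) / ((n : ℝ) * R) := by
    rw [hρ n]; exact min_le_left _ _
  -- ε n ≤ exp(-(n ρ R))
  have hεe : ε n ≤ Real.exp (-((n : ℝ) * ρ n * R)) := by
    have hnR : (0 : ℝ) < (n : ℝ) * R := by positivity
    have h1 : (n : ℝ) * ρ n * R ≤ -(1 / 2 : ℝ) * Real.log (ε n) := by
      calc (n : ℝ) * ρ n * R = ((n : ℝ) * R) * ρ n := by ring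
        _ ≤ ((n : ℝ) * R) * ((-(1 / 2 : ℝ) * Real.log (ε n)) / ((n : ℝ) * R)) :=
            mul_le_mul_of_nonneg_left hra hnR.le
        _ = -(1 / 2 : ℝ) * Real.log (ε n) := by field_simp
    calc ε n = Real.exp (Real.log (ε n)) := (Real.exp_log hε0).symm
      _ ≤ Real.exp ((1 / 2 : ℝ) * Real.log (ε n)) := by
          apply Real.exp_le_exp.mpr; nlinarith
      _ ≤ Real.exp (-((n : ℝ) * ρ n * R)) := by
          apply Real.exp_le_exp.mpr; linarith
  -- apply the key lemma
  have hkey := gallager_key n (P n) (W n) (fun x => hPnn n x) (hP1 n)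
    (fun x y => hWnn n x y) (hW1 n) R (ρ n) hR0 hr0 hr1 hn (ε n) (hε n) hεe
  -- positivity of the Gallager sum
  have hx0 : ∃ x : Fin n → 𝒳, 0 < P n x := by
    by_contra h
    push_neg at h
    have : (∑ x : Fin n → 𝒳, P n x) ≤ 0 := Finset.sum_nonpos fun x _ => h x
    rw [hP1 n] at this; linarith
  obtain ⟨x0, hx0⟩ := hx0
  have hy0 : ∃ y : Fin n → 𝒴, 0 < W n x0 y := by
    by_contra h
    push_neg at h
    have : (∑ y : Fin n → 𝒴, W n x0 y) ≤ 0 := Finset.sum_nonpos fun y _ => h y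
    rw [hW1 n x0] at this; linarith
  obtain ⟨y0, hy0⟩ := hy0
  have hTnn : ∀ y : Fin n → 𝒴, 0 ≤ ∑ x : Fin n → 𝒳, P n x * W n x y ^ (1 / (1 + ρ n)) :=
    fun y => Finset.sum_nonneg fun x _ =>
      mul_nonneg (hPnn n x) (Real.rpow_nonneg (hWnn n x y) _)
  have hT0 : 0 < ∑ x : Fin n → 𝒳, P n x * W n x y0 ^ (1 / (1 + ρ n)) := by
    have hterm : 0 < P n x0 * W n x0 y0 ^ (1 / (1 + ρ n)) :=
      mul_pos hx0 (Real.rpow_pos_of_pos hy0 _)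
    calc (0 : ℝ) < P n x0 * W n x0 y0 ^ (1 / (1 + ρ n)) := hterm
      _ ≤ _ := Finset.single_le_sum (f := fun x => P n x * W n x y0 ^ (1 / (1 + ρ n)))
          (fun x _ => mul_nonneg (hPnn n x) (Real.rpow_nonneg (hWnn n x y0) _))
          (Finset.mem_univ x0)
  have hSpos : 0 < ∑ y : Fin n → 𝒴,
      (∑ x : Fin n → 𝒳, P n x * W n x y ^ (1 / (1 + ρ n))) ^ (1 + ρ n) := by
    calc (0 : ℝ) < (∑ x : Fin n → 𝒳, P n x * W n x y0 ^ (1 / (1 + ρ n))) ^ (1 + ρ n) :=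
        Real.rpow_pos_of_pos hT0 _
      _ ≤ _ := Finset.single_le_sum
          (f := fun y => (∑ x : Fin n → 𝒳, P n x * W n x y ^ (1 / (1 + ρ n))) ^ (1 + ρ n))
          (fun y _ => Real.rpow_nonneg (hTnn y) _) (Finset.mem_univ y0)
  -- conclude
  show -(1 / (n : ℝ)) * Real.log (∑ y : Fin n → 𝒴,
      (∑ x : Fin n → 𝒳, P n x * W n x y ^ (1 / (1 + ρ n))) ^ (1 + ρ n)) ≥
      ρ n * R - 3 * Real.log 2 / (n : ℝ)
  have hlogS : Real.log (∑ y : Fin n → 𝒴,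
      (∑ x : Fin n → 𝒳, P n x * W n x y ^ (1 / (1 + ρ n))) ^ (1 + ρ n)) ≤
      3 * Real.log 2 - (n : ℝ) * ρ n * R := by
    calc Real.log (∑ y : Fin n → 𝒴,
          (∑ x : Fin n → 𝒳, P n x * W n x y ^ (1 / (1 + ρ n))) ^ (1 + ρ n))
        ≤ Real.log (8 * Real.exp (-((n : ℝ) * ρ n * R))) := Real.log_le_log hSpos hkey
      _ = Real.log 8 + -((n : ℝ) * ρ n * R) := by
          rw [Real.log_mul (by norm_num) (Real.exp_ne_zero _), Real.log_exp]
      _ = 3 * Real.log 2 - (n : ℝ) * ρ n * R := by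
          rw [show (8 : ℝ) = 2 ^ (3 : ℕ) by norm_num, Real.log_pow]
          push_cast; ring
  have hmul : -(1 / (n : ℝ)) * (3 * Real.log 2 - (n : ℝ) * ρ n * R) ≤
      -(1 / (n : ℝ)) * Real.log (∑ y : Fin n → 𝒴,
        (∑ x : Fin n → 𝒳, P n x * W n x y ^ (1 / (1 + ρ n))) ^ (1 + ρ n)) :=
    mul_le_mul_of_nonpos_left hlogS (by rw [neg_nonpos]; positivity)
  have heq : -(1 / (n : ℝ)) * (3 * Real.log 2 - (n : ℝ) * ρ n * R) =
      ρ n * R - 3 * Real.log 2 / (n : ℝ) := by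
    field_simp
    ring
  linarith
end

section
/- Let W be a general channel with finite input alphabet 𝒳 and finite output alphabet 𝒴, and define its capacity C(W) = sup_X I_inf(X;Y), the supremum over all general sources X over 𝒳 (with Y the corresponding output). For a real rate R, define E^{(n)}(R) = max over probability mass functions P_{X^n} on 𝒳^n and over ρ ∈ [0,1] of { E_0^{(n)}(ρ, X) − ρ·R }. If R < C(W), then n·E^{(n)}(R) → ∞ as n → ∞. -/
open Real Filter
open scoped Classical

/-- The capacity `C(W) = sup_X I_inf(X;Y)` of a general channel, the supremum over
all general sources `X` (sequences of probability mass functions on `𝒳ⁿ`). -/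
noncomputable def capacity {𝒳 𝒴 : Type*} [Fintype 𝒳] [Fintype 𝒴]
    (W : (n : ℕ) → (Fin n → 𝒳) → (Fin n → 𝒴) → ℝ) : ℝ :=
  sSup {I : ℝ | ∃ P : (n : ℕ) → (Fin n → 𝒳) → ℝ,
    (∀ n x, 0 ≤ P n x) ∧ (∀ n, ∑ x : Fin n → 𝒳, P n x = 1) ∧
    I = specInfMutualInfo P W}

/-- `E⁽ⁿ⁾(R)`: the maximum of `E₀⁽ⁿ⁾(ρ, X) − ρR` over all probability mass functions
on `𝒳ⁿ` and all `ρ ∈ [0,1]`. -/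
noncomputable def gallagerExponent {𝒳 𝒴 : Type*} [Fintype 𝒳] [Fintype 𝒴]
    (W : (n : ℕ) → (Fin n → 𝒳) → (Fin n → 𝒴) → ℝ) (R : ℝ) (n : ℕ) : ℝ :=
  sSup {v : ℝ | ∃ Pn : (Fin n → 𝒳) → ℝ,
    (∀ x, 0 ≤ Pn x) ∧ (∑ x : Fin n → 𝒳, Pn x = 1) ∧
    ∃ ρ ∈ Set.Icc (0 : ℝ) 1, v = gallagerE0 n Pn (W n) ρ - ρ * R}


set_option linter.unusedSectionVars false
set_option maxHeartbeats 1000000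

section GallagerAux

open Finset

variable {α β : Type*} [Fintype α] [Fintype β]

private lemma add_rpow_le_four {a b p : ℝ} (ha : 0 ≤ a) (hb : 0 ≤ b)
    (hp1 : 1 ≤ p) (hp2 : p ≤ 2) : (a + b) ^ p ≤ 4 * (a ^ p + b ^ p) := by
  have hm : 0 ≤ max a b := le_trans ha (le_max_left a b)
  have h1 : a + b ≤ 2 * max a b := by
    rcases le_total a b with h | h
    · rw [max_eq_right h]; linarith
    · rw [max_eq_left h]; linarith
  have h2 : (2:ℝ) ^ p ≤ 4 := by
    calc (2:ℝ)^p ≤ (2:ℝ)^(2:ℝ) := Real.rpow_le_rpow_of_exponent_le one_le_two hp2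
      _ = 4 := by
        rw [show (2:ℝ) = ((2:ℕ):ℝ) from by norm_num]
        rw [Real.rpow_natCast]; norm_num
  calc (a + b) ^ p ≤ (2 * max a b) ^ p :=
        Real.rpow_le_rpow (by linarith) h1 (by linarith)
    _ = 2 ^ p * (max a b) ^ p := Real.mul_rpow (by norm_num) hm
    _ ≤ 4 * (max a b) ^ p := by
        have h3 := Real.rpow_nonneg hm p
        nlinarith
    _ ≤ 4 * (a ^ p + b ^ p) := by
        have h4 := Real.rpow_nonneg ha p
        have h5 := Real.rpow_nonneg hb p
        rcases le_total a b with h | h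
        · rw [max_eq_right h]; linarith
        · rw [max_eq_left h]; linarith

private lemma log_max' {a b : ℝ} (ha : 0 < a) (hb : 0 < b) :
    Real.log (max a b) = max (Real.log a) (Real.log b) := by
  rcases le_total a b with h | h
  · rw [max_eq_right h, max_eq_right (Real.log_le_log ha h)]
  · rw [max_eq_left h, max_eq_left (Real.log_le_log hb h)]

private lemma tendsto_min_atTop {f g : ℕ → ℝ} (hf : Tendsto f atTop atTop)
    (hg : Tendsto g atTop atTop) : Tendsto (fun n => min (f n) (g n)) atTop atTop := by
  rw [tendsto_atTop]
  intro b
  filter_upwards [tendsto_atTop.1 hf b, tendsto_atTop.1 hg b] with n h1 h2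
  exact le_min h1 h2

variable {p : α → ℝ} {w : α → β → ℝ}

private lemma q_nonneg' (hp : ∀ x, 0 ≤ p x) (hw : ∀ x y, 0 ≤ w x y) (y : β) :
    0 ≤ ∑ x, p x * w x y :=
  sum_nonneg fun x _ => mul_nonneg (hp x) (hw x y)

private lemma pw_sum_one' (hp1 : ∑ x, p x = 1) (hw1 : ∀ x, ∑ y, w x y = 1) :
    ∑ x, ∑ y, p x * w x y = 1 := by
  calc ∑ x, ∑ y, p x * w x y = ∑ x, p x := by
        refine Finset.sum_congr rfl fun x _ => ?_
        rw [← Finset.mul_sum, hw1 x, mul_one]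
    _ = 1 := hp1

private lemma q_sum_one' (hp1 : ∑ x, p x = 1) (hw1 : ∀ x, ∑ y, w x y = 1) :
    ∑ y, ∑ x, p x * w x y = 1 := by
  rw [← Finset.sum_comm]
  exact pw_sum_one' hp1 hw1

private lemma key_bound (hp : ∀ x, 0 ≤ p x) (hp1 : ∑ x, p x = 1)
    (hw : ∀ x y, 0 ≤ w x y) (hw1 : ∀ x, ∑ y, w x y = 1)
    (cond : α → β → Prop) {t ρ : ℝ} (hρ0 : 0 ≤ ρ) (hρ1 : ρ ≤ 1)
    (hcond : ∀ x y, 0 < w x y → ¬ cond x y →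
      Real.exp t * (∑ x', p x' * w x' y) ≤ w x y) :
    ∑ y, (∑ x, p x * w x y ^ (1/(1+ρ))) ^ (1+ρ) ≤
      4 * (Real.exp (-(ρ*t)) + ∑ x, ∑ y, if cond x y then p x * w x y else 0) := by
  have h1ρ : (0:ℝ) < 1 + ρ := by linarith
  set r : ℝ := 1/(1+ρ) with hrdef
  have hr0 : 0 < r := by positivity
  have hre : r * (1+ρ) = 1 := by rw [hrdef]; field_simp
  set q : β → ℝ := fun y => ∑ x, p x * w x y with hqdef
  have hq0 : ∀ y, 0 ≤ q y := fun y => q_nonneg' hp hw y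
  set A : β → ℝ := fun y => ∑ x, if cond x y then 0 else p x * w x y ^ r with hAdef
  set B : β → ℝ := fun y => ∑ x, if cond x y then p x * w x y ^ r else 0 with hBdef
  have hA0 : ∀ y, 0 ≤ A y := fun y => sum_nonneg fun x _ => by
    split
    · exact le_refl 0
    · exact mul_nonneg (hp x) (Real.rpow_nonneg (hw x y) r)
  have hB0 : ∀ y, 0 ≤ B y := fun y => sum_nonneg fun x _ => by
    split
    · exact mul_nonneg (hp x) (Real.rpow_nonneg (hw x y) r)
    · exact le_refl 0
  have hAB : ∀ y, (∑ x, p x * w x y ^ r) = A y + B y := by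
    intro y
    rw [hAdef, hBdef]
    simp only [← Finset.sum_add_distrib]
    refine Finset.sum_congr rfl fun x _ => ?_
    by_cases h : cond x y <;> simp [h]
  have hAstep : ∀ y, A y ^ (1+ρ) ≤ Real.exp (-(ρ*t)) * q y := by
    intro y
    rcases eq_or_lt_of_le (hq0 y) with hqy | hqy
    · have hq0' : ∀ x ∈ (univ : Finset α), p x * w x y = 0 :=
        (Finset.sum_eq_zero_iff_of_nonneg
          (fun x _ => mul_nonneg (hp x) (hw x y))).1 hqy.symm
      have hA : A y = 0 := by
        apply Finset.sum_eq_zero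
        intro x hx
        rcases mul_eq_zero.1 (hq0' x hx) with h | h
        · simp [h]
        · simp [h, Real.zero_rpow (ne_of_gt hr0)]
      rw [hA, Real.zero_rpow (ne_of_gt h1ρ), ← hqy, mul_zero]
    · set K : ℝ := Real.exp t * q y with hKdef
      have hKpos : 0 < K := mul_pos (Real.exp_pos t) hqy
      have hterm : ∀ x ∈ (univ : Finset α), (if cond x y then 0 else p x * w x y ^ r)
          ≤ p x * w x y * K ^ (-(ρ*r)) := by
        intro x _
        have hKnn := Real.rpow_nonneg hKpos.le (-(ρ*r))
        split_ifs with h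
        · exact mul_nonneg (mul_nonneg (hp x) (hw x y)) hKnn
        · rcases eq_or_lt_of_le (hw x y) with hw0 | hwpos
          · rw [← hw0, Real.zero_rpow (ne_of_gt hr0)]
            simp
          · have hKw : K ≤ w x y := hcond x y hwpos h
            have h2 : w x y * w x y ^ (-(ρ*r)) = w x y ^ r := by
              nth_rewrite 1 [← Real.rpow_one (w x y)]
              rw [← Real.rpow_add hwpos]
              congr 1
              nlinarith [hre]
            calc p x * w x y ^ r = p x * (w x y * w x y ^ (-(ρ*r))) := by rw [h2]
              _ ≤ p x * (w x y * K ^ (-(ρ*r))) := by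
                  refine mul_le_mul_of_nonneg_left ?_ (hp x)
                  refine mul_le_mul_of_nonneg_left ?_ (hw x y)
                  exact Real.rpow_le_rpow_of_nonpos hKpos hKw
                    (neg_nonpos.2 (mul_nonneg hρ0 hr0.le))
              _ = p x * w x y * K ^ (-(ρ*r)) := by ring
      have hA1 : A y ≤ q y * K ^ (-(ρ*r)) := by
        calc A y ≤ ∑ x, p x * w x y * K ^ (-(ρ*r)) := Finset.sum_le_sum hterm
          _ = (∑ x, p x * w x y) * K ^ (-(ρ*r)) := by rw [Finset.sum_mul]
          _ = q y * K ^ (-(ρ*r)) := rfl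
      have hc : (-(ρ*r)) * (1+ρ) = -ρ := by nlinarith [hre]
      calc A y ^ (1+ρ) ≤ (q y * K ^ (-(ρ*r))) ^ (1+ρ) :=
            Real.rpow_le_rpow (hA0 y) hA1 h1ρ.le
        _ = q y ^ (1+ρ) * K ^ (-ρ) := by
            rw [Real.mul_rpow (hq0 y) (Real.rpow_nonneg hKpos.le _),
              ← Real.rpow_mul hKpos.le, hc]
        _ = Real.exp (-(ρ*t)) * q y := by
            rw [hKdef, Real.mul_rpow (Real.exp_pos t).le (hq0 y), ← Real.exp_mul,
              show q y ^ (1+ρ) * (Real.exp (t * -ρ) * q y ^ (-ρ))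
                = Real.exp (t * -ρ) * (q y ^ (1+ρ) * q y ^ (-ρ)) from by ring,
              ← Real.rpow_add hqy, show (1+ρ) + -ρ = (1:ℝ) from by ring, Real.rpow_one,
              show t * -ρ = -(ρ*t) from by ring]
  have hBstep : ∀ y, B y ^ (1+ρ) ≤ ∑ x, if cond x y then p x * w x y else 0 := by
    intro y
    have hz : ∀ x ∈ (univ : Finset α), 0 ≤ (if cond x y then w x y ^ r else 0) := by
      intro x _
      split
      · exact Real.rpow_nonneg (hw x y) r
      · exact le_refl 0
    have hB' : B y = ∑ x, p x * (if cond x y then w x y ^ r else 0) := by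
      rw [hBdef]
      refine Finset.sum_congr rfl fun x _ => ?_
      split <;> simp
    have hJ := Real.rpow_arith_mean_le_arith_mean_rpow univ p
      (fun x => if cond x y then w x y ^ r else 0) (fun x _ => hp x) hp1 hz
      (show (1:ℝ) ≤ 1+ρ by linarith)
    rw [hB']
    refine le_trans hJ (le_of_eq (Finset.sum_congr rfl fun x _ => ?_))
    beta_reduce
    split_ifs with h
    · rw [← Real.rpow_mul (hw x y), hre, Real.rpow_one]
    · rw [Real.zero_rpow (ne_of_gt h1ρ), mul_zero]
  calc ∑ y, (∑ x, p x * w x y ^ r) ^ (1+ρ)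
      = ∑ y, (A y + B y) ^ (1+ρ) := by
        refine Finset.sum_congr rfl fun y _ => ?_
        rw [hAB y]
    _ ≤ ∑ y, (4 * (A y ^ (1+ρ) + B y ^ (1+ρ))) := Finset.sum_le_sum fun y _ =>
        add_rpow_le_four (hA0 y) (hB0 y) (by linarith) (by linarith)
    _ = 4 * ((∑ y, A y ^ (1+ρ)) + ∑ y, B y ^ (1+ρ)) := by
        rw [← Finset.mul_sum, Finset.sum_add_distrib]
    _ ≤ 4 * (Real.exp (-(ρ*t)) + ∑ x, ∑ y, if cond x y then p x * w x y else 0) := by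
        have e1 : (∑ y, A y ^ (1+ρ)) ≤ Real.exp (-(ρ*t)) := by
          calc (∑ y, A y ^ (1+ρ)) ≤ ∑ y, Real.exp (-(ρ*t)) * q y :=
              Finset.sum_le_sum fun y _ => hAstep y
            _ = Real.exp (-(ρ*t)) * ∑ y, q y := by rw [Finset.mul_sum]
            _ = Real.exp (-(ρ*t)) := by
                rw [show (∑ y, q y) = 1 from q_sum_one' hp1 hw1, mul_one]
        have e2 : (∑ y, B y ^ (1+ρ)) ≤ ∑ x, ∑ y, if cond x y then p x * w x y else 0 := by
          rw [Finset.sum_comm (s := (univ : Finset α)) (t := (univ : Finset β))]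
          exact Finset.sum_le_sum fun y _ => hBstep y
        linarith

private lemma key_pos (hp : ∀ x, 0 ≤ p x) (hp1 : ∑ x, p x = 1)
    (hw : ∀ x y, 0 ≤ w x y) (hw1 : ∀ x, ∑ y, w x y = 1) {ρ : ℝ} (hρ0 : 0 ≤ ρ) :
    0 < ∑ y, (∑ x, p x * w x y ^ (1/(1+ρ))) ^ (1+ρ) := by
  have h1ρ : (0:ℝ) < 1+ρ := by linarith
  have hr0 : (0:ℝ) < 1/(1+ρ) := by positivity
  have hinn : ∀ y, 0 ≤ ∑ x, p x * w x y ^ (1/(1+ρ)) :=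
    fun y => sum_nonneg fun x _ => mul_nonneg (hp x) (Real.rpow_nonneg (hw x y) _)
  have hex : ∃ x y, 0 < p x * w x y := by
    by_contra h
    push_neg at h
    have h0 : ∑ x, ∑ y, p x * w x y = 0 :=
      Finset.sum_eq_zero fun x _ => Finset.sum_eq_zero fun y _ =>
        le_antisymm (h x y) (mul_nonneg (hp x) (hw x y))
    rw [pw_sum_one' hp1 hw1] at h0
    norm_num at h0
  obtain ⟨x0, y0, hx0⟩ := hex
  have hppos : 0 < p x0 := by
    by_contra hc
    push_neg at hc
    nlinarith [hw x0 y0]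
  have hwpos : 0 < w x0 y0 := by
    by_contra hc
    push_neg at hc
    nlinarith [hp x0]
  refine Finset.sum_pos' (fun y _ => Real.rpow_nonneg (hinn y) _) ⟨y0, Finset.mem_univ y0, ?_⟩
  apply Real.rpow_pos_of_pos
  refine Finset.sum_pos' (fun x _ => mul_nonneg (hp x) (Real.rpow_nonneg (hw x y0) _))
    ⟨x0, Finset.mem_univ x0, mul_pos hppos (Real.rpow_pos_of_pos hwpos _)⟩

private lemma key_lower [Nonempty β] (hp : ∀ x, 0 ≤ p x) (hp1 : ∑ x, p x = 1)
    (hw : ∀ x y, 0 ≤ w x y) (hw1 : ∀ x, ∑ y, w x y = 1) {ρ : ℝ} (hρ0 : 0 ≤ ρ) (hρ1 : ρ ≤ 1) :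
    (Fintype.card β : ℝ) ^ (-ρ) ≤ ∑ y, (∑ x, p x * w x y ^ (1/(1+ρ))) ^ (1+ρ) := by
  have h1ρ : (0:ℝ) < 1+ρ := by linarith
  have hr0 : (0:ℝ) < 1/(1+ρ) := by positivity
  have hr1 : 1/(1+ρ) ≤ 1 := by
    rw [div_le_one h1ρ]; linarith
  have hwle : ∀ x y, w x y ≤ 1 := by
    intro x y
    calc w x y ≤ ∑ y', w x y' := Finset.single_le_sum (fun y' _ => hw x y') (mem_univ y)
      _ = 1 := hw1 x
  have hstep1 : ∀ y, (∑ x, p x * w x y) ≤ ∑ x, p x * w x y ^ (1/(1+ρ)) := by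
    intro y
    refine Finset.sum_le_sum fun x _ => ?_
    refine mul_le_mul_of_nonneg_left ?_ (hp x)
    rcases eq_or_lt_of_le (hw x y) with h0 | h0
    · rw [← h0, Real.zero_rpow (ne_of_gt hr0)]
    · calc w x y = w x y ^ (1:ℝ) := (Real.rpow_one _).symm
        _ ≤ w x y ^ (1/(1+ρ)) := Real.rpow_le_rpow_of_exponent_ge h0 (hwle x y) hr1
  set M : ℝ := (Fintype.card β : ℝ) with hMdef
  have hMpos : 0 < M := by
    rw [hMdef]
    exact_mod_cast Fintype.card_pos
  have hJ := Real.rpow_arith_mean_le_arith_mean_rpow univ (fun _ => M⁻¹)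
    (fun y => ∑ x, p x * w x y) (fun _ _ => by positivity)
    (by
      rw [Finset.sum_const, Finset.card_univ, nsmul_eq_mul]
      exact mul_inv_cancel₀ hMpos.ne')
    (fun y _ => q_nonneg' hp hw y) (show (1:ℝ) ≤ 1+ρ by linarith)
  rw [← Finset.mul_sum, ← Finset.mul_sum, q_sum_one' hp1 hw1, mul_one] at hJ
  have h3 : ∑ y, (∑ x, p x * w x y) ^ (1+ρ) ≤ ∑ y, (∑ x, p x * w x y ^ (1/(1+ρ))) ^ (1+ρ) :=
    Finset.sum_le_sum fun y _ => Real.rpow_le_rpow (q_nonneg' hp hw y) (hstep1 y) h1ρ.le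
  have h4 : M * M⁻¹ ^ (1+ρ) = M ^ (-ρ) := by
    rw [Real.inv_rpow hMpos.le, ← Real.rpow_neg hMpos.le]
    nth_rewrite 1 [← Real.rpow_one M]
    rw [← Real.rpow_add hMpos]
    congr 1
    ring
  calc M ^ (-ρ) = M * M⁻¹ ^ (1+ρ) := h4.symm
    _ ≤ M * (M⁻¹ * ∑ y, (∑ x, p x * w x y) ^ (1+ρ)) := mul_le_mul_of_nonneg_left hJ hMpos.le
    _ = ∑ y, (∑ x, p x * w x y) ^ (1+ρ) := by
        field_simp
    _ ≤ _ := h3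

end GallagerAux

section Chan
open Finset
variable {𝒳 𝒴 : Type*} [Fintype 𝒳] [Fintype 𝒴] [Nonempty 𝒳] [Nonempty 𝒴]
variable {W : (n : ℕ) → (Fin n → 𝒳) → (Fin n → 𝒴) → ℝ}

private lemma prInf_nonneg (P : (n : ℕ) → (Fin n → 𝒳) → ℝ)
    (hP0 : ∀ n x, 0 ≤ P n x) (hWnn : ∀ n x y, 0 ≤ W n x y) (β : ℝ) (n : ℕ) :
    0 ≤ prInfDensityLT P W β n := by
  refine Finset.sum_nonneg fun x _ => Finset.sum_nonneg fun y _ => ?_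
  split
  · exact mul_nonneg (hP0 n x) (hWnn n x y)
  · exact le_refl 0

private lemma tendsto_prInf_neg_one (P : (n : ℕ) → (Fin n → 𝒳) → ℝ)
    (hP0 : ∀ n x, 0 ≤ P n x) (hP1 : ∀ n, ∑ x : Fin n → 𝒳, P n x = 1)
    (hWnn : ∀ n x y, 0 ≤ W n x y) (hW1 : ∀ n x, ∑ y : Fin n → 𝒴, W n x y = 1) :
    Tendsto (fun n => prInfDensityLT P W (-1) n) atTop (nhds 0) := by
  have hg : Tendsto (fun n : ℕ => Real.exp (-(n:ℝ))) atTop (nhds 0) :=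
    Real.tendsto_exp_atBot.comp (tendsto_neg_atTop_atBot.comp tendsto_natCast_atTop_atTop)
  refine squeeze_zero' (Eventually.of_forall fun n => prInf_nonneg P hP0 hWnn _ n) ?_ hg
  filter_upwards [eventually_ge_atTop 1] with n hn
  have hnpos : (0:ℝ) < (n:ℝ) := by exact_mod_cast hn
  have hterm : ∀ x ∈ (univ : Finset (Fin n → 𝒳)), ∀ y ∈ (univ : Finset (Fin n → 𝒴)),
      (if (1 / (n : ℝ)) * Real.log (W n x y / ∑ x' : Fin n → 𝒳, P n x' * W n x' y) < -1
        then P n x * W n x y else 0)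
      ≤ Real.exp (-(n:ℝ)) * (P n x * ∑ x' : Fin n → 𝒳, P n x' * W n x' y) := by
    intro x _ y _
    have hq0 : 0 ≤ ∑ x' : Fin n → 𝒳, P n x' * W n x' y := q_nonneg' (hP0 n) (hWnn n) y
    have hRnn : 0 ≤ Real.exp (-(n:ℝ)) * (P n x * ∑ x' : Fin n → 𝒳, P n x' * W n x' y) :=
      mul_nonneg (Real.exp_pos _).le (mul_nonneg (hP0 n x) hq0)
    split_ifs with h
    · rcases eq_or_lt_of_le (hP0 n x) with hp0 | hp0
      · have hz : P n x * W n x y = 0 := by rw [← hp0, zero_mul]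
        exact le_trans hz.le hRnn
      rcases eq_or_lt_of_le (hWnn n x y) with hw0 | hw0
      · have hz : P n x * W n x y = 0 := by rw [← hw0, mul_zero]
        exact le_trans hz.le hRnn
      have hqpos : 0 < ∑ x' : Fin n → 𝒳, P n x' * W n x' y := by
        refine Finset.sum_pos' (fun x' _ => mul_nonneg (hP0 n x') (hWnn n x' y))
          ⟨x, Finset.mem_univ x, mul_pos hp0 hw0⟩
      have hdiv : 0 < W n x y / ∑ x' : Fin n → 𝒳, P n x' * W n x' y := div_pos hw0 hqpos
      have h1 : Real.log (W n x y / ∑ x' : Fin n → 𝒳, P n x' * W n x' y) < -(n:ℝ) := by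
        have h2 := (mul_lt_mul_iff_right₀ hnpos).2 h
        calc Real.log (W n x y / ∑ x' : Fin n → 𝒳, P n x' * W n x' y)
            = (n:ℝ) * ((1 / (n : ℝ)) *
              Real.log (W n x y / ∑ x' : Fin n → 𝒳, P n x' * W n x' y)) := by
              field_simp
          _ < (n:ℝ) * (-1) := h2
          _ = -(n:ℝ) := by ring
      have h3 : W n x y / (∑ x' : Fin n → 𝒳, P n x' * W n x' y) < Real.exp (-(n:ℝ)) := by
        rw [← Real.exp_log hdiv]
        exact Real.exp_lt_exp.2 h1
      have h4 : W n x y < Real.exp (-(n:ℝ)) * ∑ x' : Fin n → 𝒳, P n x' * W n x' y :=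
        (div_lt_iff₀ hqpos).1 h3
      calc P n x * W n x y
          ≤ P n x * (Real.exp (-(n:ℝ)) * ∑ x' : Fin n → 𝒳, P n x' * W n x' y) :=
            mul_le_mul_of_nonneg_left h4.le (hP0 n x)
        _ = Real.exp (-(n:ℝ)) * (P n x * ∑ x' : Fin n → 𝒳, P n x' * W n x' y) := by ring
    · exact hRnn
  calc prInfDensityLT P W (-1) n
      ≤ ∑ x : Fin n → 𝒳, ∑ y : Fin n → 𝒴,
        Real.exp (-(n:ℝ)) * (P n x * ∑ x' : Fin n → 𝒳, P n x' * W n x' y) :=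
        Finset.sum_le_sum fun x hx => Finset.sum_le_sum (hterm x hx)
    _ = Real.exp (-(n:ℝ)) * ∑ x : Fin n → 𝒳, P n x *
        (∑ y : Fin n → 𝒴, ∑ x' : Fin n → 𝒳, P n x' * W n x' y) := by
        rw [Finset.mul_sum]
        refine Finset.sum_congr rfl fun x _ => ?_
        rw [← Finset.mul_sum, ← Finset.mul_sum]
    _ = Real.exp (-(n:ℝ)) := by
        rw [show (∑ y : Fin n → 𝒴, ∑ x' : Fin n → 𝒳, P n x' * W n x' y) = 1 from by
          rw [← Finset.sum_comm]; exact pw_sum_one' (hP1 n) (hW1 n)]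
        simp [hP1 n]

private lemma bddAbove_gallagerSet (hWnn : ∀ n x y, 0 ≤ W n x y)
    (hW1 : ∀ n x, ∑ y : Fin n → 𝒴, W n x y = 1) (R : ℝ) {n : ℕ} (hn : 1 ≤ n) :
    BddAbove {v : ℝ | ∃ Pn : (Fin n → 𝒳) → ℝ,
      (∀ x, 0 ≤ Pn x) ∧ (∑ x : Fin n → 𝒳, Pn x = 1) ∧
      ∃ ρ ∈ Set.Icc (0 : ℝ) 1, v = gallagerE0 n Pn (W n) ρ - ρ * R} := by
  refine ⟨Real.log (Fintype.card (Fin n → 𝒴) : ℝ) + |R|, ?_⟩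
  rintro v ⟨Pn, hPn0, hPn1, ρ, ⟨hρ0, hρ1⟩, rfl⟩
  set C : ℝ := (Fintype.card (Fin n → 𝒴) : ℝ) with hCdef
  set S : ℝ := ∑ y : Fin n → 𝒴,
    (∑ x : Fin n → 𝒳, Pn x * W n x y ^ (1 / (1 + ρ))) ^ (1 + ρ) with hSdef
  have hS : C ^ (-ρ) ≤ S := key_lower hPn0 hPn1 (hWnn n) (hW1 n) hρ0 hρ1
  have hSpos : 0 < S := key_pos hPn0 hPn1 (hWnn n) (hW1 n) hρ0
  have hC1 : (1:ℝ) ≤ C := by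
    rw [hCdef]; exact_mod_cast Fintype.card_pos
  have hCpos : (0:ℝ) < C := by linarith
  have hlog : -ρ * Real.log C ≤ Real.log S := by
    rw [← Real.log_rpow hCpos]
    exact Real.log_le_log (Real.rpow_pos_of_pos hCpos _) hS
  have hn1 : (1:ℝ) ≤ (n:ℝ) := by exact_mod_cast hn
  have hnpos : (0:ℝ) < (n:ℝ) := by linarith
  have hlogC : 0 ≤ Real.log C := Real.log_nonneg hC1
  have h6 : -Real.log S ≤ ρ * Real.log C := by linarith
  have h5 : -(1/(n:ℝ)) * Real.log S ≤ Real.log C := by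
    have hinv1 : 1/(n:ℝ) ≤ 1 := by
      rw [div_le_one hnpos]; exact hn1
    have hinv0 : (0:ℝ) ≤ 1/(n:ℝ) := by positivity
    have h9 : 0 ≤ ρ * Real.log C := mul_nonneg hρ0 hlogC
    calc -(1/(n:ℝ)) * Real.log S = (1/(n:ℝ)) * (-Real.log S) := by ring
      _ ≤ (1/(n:ℝ)) * (ρ * Real.log C) := mul_le_mul_of_nonneg_left h6 hinv0
      _ ≤ 1 * (ρ * Real.log C) := mul_le_mul_of_nonneg_right hinv1 h9
      _ = ρ * Real.log C := one_mul _
      _ ≤ 1 * Real.log C := mul_le_mul_of_nonneg_right hρ1 hlogC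
      _ = Real.log C := one_mul _
  have h8 : -(ρ*R) ≤ |R| := by
    calc -(ρ*R) = ρ * (-R) := by ring
      _ ≤ ρ * |R| := mul_le_mul_of_nonneg_left (neg_le_abs R) hρ0
      _ ≤ 1 * |R| := mul_le_mul_of_nonneg_right hρ1 (abs_nonneg R)
      _ = |R| := one_mul _
  show gallagerE0 n Pn (W n) ρ - ρ * R ≤ Real.log C + |R|
  unfold gallagerE0
  rw [← hSdef]
  linarith

private lemma gallagerExponent_lower (hWnn : ∀ n x y, 0 ≤ W n x y)
    (hW1 : ∀ n x, ∑ y : Fin n → 𝒴, W n x y = 1)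
    (P : (n : ℕ) → (Fin n → 𝒳) → ℝ) (hP0 : ∀ n x, 0 ≤ P n x)
    (hP1 : ∀ n, ∑ x : Fin n → 𝒳, P n x = 1) (R β : ℝ) {n : ℕ} (hn : 1 ≤ n)
    {ρ : ℝ} (hρ0 : 0 ≤ ρ) (hρ1 : ρ ≤ 1) {E : ℝ} (hE : 0 < E)
    (hεE : prInfDensityLT P W β n ≤ E) :
    -Real.log 8 + min (ρ*((n:ℝ)*β)) (-Real.log E) - (n:ℝ)*(ρ*R)
      ≤ (n:ℝ) * gallagerExponent W R n := by
  have hn1 : (1:ℝ) ≤ (n:ℝ) := by exact_mod_cast hn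
  have hnpos : (0:ℝ) < (n:ℝ) := by linarith
  set S : ℝ := ∑ y : Fin n → 𝒴,
    (∑ x : Fin n → 𝒳, P n x * W n x y ^ (1 / (1 + ρ))) ^ (1 + ρ) with hSdef
  have hSpos : 0 < S := key_pos (hP0 n) (hP1 n) (hWnn n) (hW1 n) hρ0
  have hcond : ∀ (x : Fin n → 𝒳) (y : Fin n → 𝒴), 0 < W n x y →
      ¬ ((1 / (n:ℝ)) * Real.log (W n x y / ∑ x' : Fin n → 𝒳, P n x' * W n x' y) < β) →
      Real.exp ((n:ℝ)*β) * (∑ x' : Fin n → 𝒳, P n x' * W n x' y) ≤ W n x y := by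
    intro x y hwpos hnc
    push_neg at hnc
    rcases eq_or_lt_of_le (q_nonneg' (hP0 n) (hWnn n) y) with hq | hq
    · rw [← hq, mul_zero]
      exact hwpos.le
    · have hdiv : 0 < W n x y / ∑ x' : Fin n → 𝒳, P n x' * W n x' y := div_pos hwpos hq
      have h1 : (n:ℝ)*β ≤ Real.log (W n x y / ∑ x' : Fin n → 𝒳, P n x' * W n x' y) := by
        have h2 := mul_le_mul_of_nonneg_left hnc hnpos.le
        calc (n:ℝ)*β ≤ (n:ℝ) * ((1/(n:ℝ)) *
            Real.log (W n x y / ∑ x' : Fin n → 𝒳, P n x' * W n x' y)) := h2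
          _ = Real.log (W n x y / ∑ x' : Fin n → 𝒳, P n x' * W n x' y) := by
              field_simp
      have h2 : Real.exp ((n:ℝ)*β) ≤ W n x y / ∑ x' : Fin n → 𝒳, P n x' * W n x' y := by
        rw [← Real.exp_log hdiv]
        exact Real.exp_le_exp.2 h1
      exact (le_div_iff₀ hq).1 h2
  have hkey := key_bound (hP0 n) (hP1 n) (hWnn n) (hW1 n)
    (fun x y => (1 / (n:ℝ)) * Real.log (W n x y / ∑ x' : Fin n → 𝒳, P n x' * W n x' y) < β)
    (t := (n:ℝ)*β) hρ0 hρ1 hcond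
  have hkey' : S ≤ 4 * (Real.exp (-(ρ*((n:ℝ)*β))) + prInfDensityLT P W β n) := hkey
  have hS8 : S ≤ 8 * max (Real.exp (-(ρ*((n:ℝ)*β)))) E := by
    have h1 : prInfDensityLT P W β n ≤ max (Real.exp (-(ρ*((n:ℝ)*β)))) E :=
      le_trans hεE (le_max_right _ _)
    have h2 : Real.exp (-(ρ*((n:ℝ)*β))) ≤ max (Real.exp (-(ρ*((n:ℝ)*β)))) E :=
      le_max_left _ _
    linarith
  have hmaxpos : 0 < max (Real.exp (-(ρ*((n:ℝ)*β)))) E :=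
    lt_of_lt_of_le (Real.exp_pos _) (le_max_left _ _)
  have hlogS : Real.log S ≤ Real.log 8 + max (-(ρ*((n:ℝ)*β))) (Real.log E) := by
    calc Real.log S ≤ Real.log (8 * max (Real.exp (-(ρ*((n:ℝ)*β)))) E) :=
          Real.log_le_log hSpos hS8
      _ = Real.log 8 + Real.log (max (Real.exp (-(ρ*((n:ℝ)*β)))) E) :=
          Real.log_mul (by norm_num) hmaxpos.ne'
      _ = Real.log 8 + max (-(ρ*((n:ℝ)*β))) (Real.log E) := by
          rw [log_max' (Real.exp_pos _) hE, Real.log_exp]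
  have hmem : gallagerE0 n (P n) (W n) ρ - ρ * R ∈ {v : ℝ | ∃ Pn : (Fin n → 𝒳) → ℝ,
      (∀ x, 0 ≤ Pn x) ∧ (∑ x : Fin n → 𝒳, Pn x = 1) ∧
      ∃ ρ' ∈ Set.Icc (0 : ℝ) 1, v = gallagerE0 n Pn (W n) ρ' - ρ' * R} :=
    ⟨P n, hP0 n, hP1 n, ρ, ⟨hρ0, hρ1⟩, rfl⟩
  have hle : gallagerE0 n (P n) (W n) ρ - ρ * R ≤ gallagerExponent W R n :=
    le_csSup (bddAbove_gallagerSet hWnn hW1 R hn) hmem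
  have hnne : (n:ℝ) ≠ 0 := hnpos.ne'
  have heq : (n:ℝ) * (gallagerE0 n (P n) (W n) ρ - ρ * R) = -Real.log S - (n:ℝ)*(ρ*R) := by
    unfold gallagerE0
    rw [← hSdef]
    field_simp
    try ring
  have hfin : -Real.log 8 + min (ρ*((n:ℝ)*β)) (-Real.log E) ≤ -Real.log S := by
    rcases le_total (-(ρ*((n:ℝ)*β))) (Real.log E) with h | h
    · rw [max_eq_right h] at hlogS
      have := min_le_right (ρ*((n:ℝ)*β)) (-Real.log E)
      linarith
    · rw [max_eq_left h] at hlogS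
      have := min_le_left (ρ*((n:ℝ)*β)) (-Real.log E)
      linarith
  calc -Real.log 8 + min (ρ*((n:ℝ)*β)) (-Real.log E) - (n:ℝ)*(ρ*R)
      ≤ -Real.log S - (n:ℝ)*(ρ*R) := by linarith
    _ = (n:ℝ) * (gallagerE0 n (P n) (W n) ρ - ρ * R) := heq.symm
    _ ≤ (n:ℝ) * gallagerExponent W R n := mul_le_mul_of_nonneg_left hle hnpos.le

end Chan

theorem gallager_exponent_tendsto_atTop
    {𝒳 𝒴 : Type*} [Fintype 𝒳] [Fintype 𝒴] [Nonempty 𝒳] [Nonempty 𝒴]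
    (W : (n : ℕ) → (Fin n → 𝒳) → (Fin n → 𝒴) → ℝ)
    (hWnn : ∀ n x y, 0 ≤ W n x y) (hW1 : ∀ n x, ∑ y : Fin n → 𝒴, W n x y = 1)
    (R : ℝ) (hR : R < capacity W) :
    Tendsto (fun n : ℕ => (n : ℝ) * gallagerExponent W R n) atTop atTop := by
  classical
  -- extract a source `P` and a rate `β > R` with vanishing spectrum tail
  rw [capacity] at hR
  have hCne : {I : ℝ | ∃ P : (n : ℕ) → (Fin n → 𝒳) → ℝ,
      (∀ n x, 0 ≤ P n x) ∧ (∀ n, ∑ x : Fin n → 𝒳, P n x = 1) ∧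
      I = specInfMutualInfo P W}.Nonempty := by
    refine ⟨specInfMutualInfo (fun n _ => ((Fintype.card (Fin n → 𝒳) : ℝ))⁻¹) W,
      (fun n _ => ((Fintype.card (Fin n → 𝒳) : ℝ))⁻¹), fun n x => by positivity, fun n => ?_, rfl⟩
    rw [Finset.sum_const, Finset.card_univ, nsmul_eq_mul]
    refine mul_inv_cancel₀ ?_
    exact_mod_cast Fintype.card_ne_zero
  obtain ⟨I, hImem, hRI⟩ := exists_lt_of_lt_csSup hCne hR
  obtain ⟨P, hP0, hP1, rfl⟩ := hImem
  rw [specInfMutualInfo] at hRI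
  have hBne : {β : ℝ | Tendsto (fun n => prInfDensityLT P W β n) atTop (nhds 0)}.Nonempty :=
    ⟨-1, tendsto_prInf_neg_one P hP0 hP1 hWnn hW1⟩
  obtain ⟨β, hβ, hRβ⟩ := exists_lt_of_lt_csSup hBne hRI
  have hβ : Tendsto (fun n => prInfDensityLT P W β n) atTop (nhds 0) := hβ
  -- the regularized error sequence and its log
  set ε' : ℕ → ℝ := fun n => max (prInfDensityLT P W β n) (Real.exp (-(n:ℝ))) with hε'def
  have hε'pos : ∀ n, 0 < ε' n := fun n => lt_of_lt_of_le (Real.exp_pos _) (le_max_right _ _)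
  have hε'0 : Tendsto ε' atTop (nhds 0) := by
    have h2 : Tendsto (fun n : ℕ => Real.exp (-(n:ℝ))) atTop (nhds 0) :=
      Real.tendsto_exp_atBot.comp (tendsto_neg_atTop_atBot.comp tendsto_natCast_atTop_atTop)
    have h3 := hβ.max h2
    simpa using h3
  set L : ℕ → ℝ := fun n => -Real.log (ε' n) with hLdef
  have hL : Tendsto L atTop atTop := by
    have h1 : Tendsto ε' atTop (nhdsWithin 0 (Set.Ioi 0)) :=
      tendsto_nhdsWithin_iff.2 ⟨hε'0, Eventually.of_forall fun n => hε'pos n⟩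
    have h2 : Tendsto (fun n => Real.log (ε' n)) atTop atBot :=
      Real.tendsto_log_nhdsGT_zero.comp h1
    exact tendsto_neg_atBot_atTop.comp h2
  set M : ℝ := max R 1 with hMdef
  have hM1 : (1:ℝ) ≤ M := le_max_right _ _
  have hMpos : 0 < M := lt_of_lt_of_le one_pos hM1
  have hRM : R ≤ M := le_max_left _ _
  have hβR : 0 < β - R := sub_pos.2 hRβ
  set D : ℕ → ℝ := fun n => min ((n:ℝ)) (L n / (2*M)) with hDdef
  have hD : Tendsto D atTop atTop :=
    tendsto_min_atTop tendsto_natCast_atTop_atTop (hL.atTop_div_const (by positivity))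
  have hRHS : Tendsto (fun n => -Real.log 8 + min ((β - R) * D n) (L n / 2)) atTop atTop :=
    tendsto_atTop_add_const_left _ _
      (tendsto_min_atTop (hD.const_mul_atTop hβR) (hL.atTop_div_const two_pos))
  refine tendsto_atTop_mono' atTop ?_ hRHS
  filter_upwards [eventually_ge_atTop 1, hL.eventually_ge_atTop 0] with n hn hLn
  have hnpos : (0:ℝ) < (n:ℝ) := by exact_mod_cast hn
  set ρ : ℝ := min 1 (L n / (2*(n:ℝ)*M)) with hρdef
  have hρ0 : 0 ≤ ρ := le_min zero_le_one (by positivity)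
  have hρ1 : ρ ≤ 1 := min_le_left _ _
  have h2nM : (0:ℝ) < 2*(n:ℝ)*M := by positivity
  have hnρ : (n:ℝ) * ρ = D n := by
    have hD' : D n = min ((n:ℝ)) (L n / (2*M)) := rfl
    rw [hD']
    rcases le_total 1 (L n / (2*(n:ℝ)*M)) with h | h
    · rw [hρdef, min_eq_left h, mul_one]
      have h1 : 2*(n:ℝ)*M ≤ L n := (one_le_div h2nM).1 h
      have h2 : (n:ℝ) ≤ L n / (2*M) := by
        rw [le_div_iff₀ (by positivity)]
        nlinarith
      rw [min_eq_left h2]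
    · rw [hρdef, min_eq_right h]
      have h1 : L n ≤ 2*(n:ℝ)*M := (div_le_one h2nM).1 h
      have h2 : (n:ℝ) * (L n / (2*(n:ℝ)*M)) = L n / (2*M) := by
        field_simp
      have h3 : L n / (2*M) ≤ (n:ℝ) := by
        rw [div_le_iff₀ (by positivity)]
        nlinarith
      rw [h2, min_eq_right h3]
  have hεE : prInfDensityLT P W β n ≤ ε' n := le_max_left _ _
  have hlow := gallagerExponent_lower hWnn hW1 P hP0 hP1 R β hn hρ0 hρ1 (hε'pos n) hεE
  have hLn' : -Real.log (ε' n) = L n := rfl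
  rw [hLn'] at hlow
  refine le_trans ?_ hlow
  have hDle : D n ≤ L n / (2*M) := min_le_right _ _
  have hr1 : ρ*((n:ℝ)*β) - (n:ℝ)*(ρ*R) = (β - R) * D n := by
    rw [← hnρ]
    ring
  have hr2 : L n / 2 ≤ L n - (n:ℝ)*(ρ*R) := by
    have h3 : (n:ℝ)*(ρ*R) ≤ (n:ℝ)*(ρ*M) :=
      mul_le_mul_of_nonneg_left (mul_le_mul_of_nonneg_left hRM hρ0) hnpos.le
    have h4 : (n:ℝ)*(ρ*M) = D n * M := by
      rw [← hnρ]
      ring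
    have h5 : D n * M ≤ L n / 2 := by
      have h6 := mul_le_mul_of_nonneg_right hDle hMpos.le
      have h7 : L n / (2*M) * M = L n / 2 := by
        field_simp
      linarith
    linarith
  have hmin : min ((β-R)*D n) (L n/2) ≤ min (ρ*((n:ℝ)*β)) (L n) - (n:ℝ)*(ρ*R) := by
    rw [← min_sub_sub_right]
    refine min_le_min (le_of_eq hr1.symm) hr2
  linarith
end

section
/- Let (X,Y) be a general correlated source with finite alphabets 𝒳 and 𝒴, and for a real rate R define J^{(n)}(R) = max_{ρ∈[0,1]} { ρ·R − J_0^{(n)}(ρ) }. If R > H_sup(X|Y), then n·J^{(n)}(R) → ∞ as n → ∞. -/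
open Real Filter
open scoped Classical

lemma sum_rpow_le_card_rpow_mul {ι : Type*} (s : Finset ι) (f : ι → ℝ)
    (hf : ∀ i ∈ s, 0 ≤ f i) (c : ℝ) (hc0 : 0 < c) (hc1 : c ≤ 1) :
    ∑ i ∈ s, f i ^ c ≤ (s.card : ℝ) ^ (1 - c) * (∑ i ∈ s, f i) ^ c := by
  rcases s.eq_empty_or_nonempty with rfl | hs
  · simp [Real.zero_rpow (ne_of_gt hc0)]
  have hm : (0:ℝ) < s.card := by exact_mod_cast Finset.card_pos.mpr hs
  have hp : (1:ℝ) ≤ 1 / c := by rw [le_div_iff₀ hc0]; linarith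
  have key := Real.arith_mean_le_rpow_mean s (fun _ => 1 / (s.card : ℝ))
    (fun i => f i ^ c) (fun i _ => by positivity)
    (by rw [Finset.sum_const, nsmul_eq_mul]; field_simp)
    (fun i hi => Real.rpow_nonneg (hf i hi) c) hp
  simp only [one_div_one_div] at key
  have hrw : (∑ i ∈ s, 1 / (s.card : ℝ) * (f i ^ c) ^ (1/c)) = ∑ i ∈ s, 1 / (s.card : ℝ) * f i := by
    refine Finset.sum_congr rfl (fun i hi => ?_)
    rw [← Real.rpow_mul (hf i hi), mul_one_div_cancel (ne_of_gt hc0), Real.rpow_one]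
  rw [hrw, ← Finset.mul_sum, ← Finset.mul_sum] at key
  have hsum : 0 ≤ ∑ i ∈ s, f i := Finset.sum_nonneg hf
  rw [Real.mul_rpow (by positivity) hsum] at key
  have h2 := mul_le_mul_of_nonneg_left key (le_of_lt hm)
  calc ∑ i ∈ s, f i ^ c = (s.card : ℝ) * (1 / (s.card : ℝ) * ∑ i ∈ s, f i ^ c) := by
        field_simp
    _ ≤ (s.card : ℝ) * ((1 / (s.card : ℝ)) ^ c * (∑ i ∈ s, f i) ^ c) := h2
    _ = (s.card : ℝ) ^ (1 - c) * (∑ i ∈ s, f i) ^ c := by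
        rw [one_div, Real.inv_rpow (le_of_lt hm), ← Real.rpow_neg (le_of_lt hm), ← mul_assoc]
        congr 1
        nth_rewrite 1 [← Real.rpow_one ((s.card : ℝ))]
        rw [← Real.rpow_add hm]
        rw [sub_eq_add_neg]

lemma sum_le_rpow_sum_rpow {ι : Type*} [Fintype ι] (f : ι → ℝ) (hf : ∀ i, 0 ≤ f i) (ρ : ℝ) (hρ0 : 0 ≤ ρ) :
    ∑ i, f i ≤ (∑ i, f i ^ (1/(1+ρ))) ^ (1+ρ) := by
  have h1ρ : (0:ℝ) < 1 + ρ := by linarith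
  set c : ℝ := 1/(1+ρ) with hc
  have hc0 : 0 < c := by positivity
  have hcmul : c * (1+ρ) = 1 := one_div_mul_cancel (ne_of_gt h1ρ)
  set F : ℝ := ∑ i, f i ^ c with hF
  have hF0 : 0 ≤ F := Finset.sum_nonneg fun i _ => Real.rpow_nonneg (hf i) c
  rcases eq_or_lt_of_le hF0 with hF0' | hFpos
  · have hz : ∀ i, f i = 0 := by
      intro i
      by_contra h
      have hpos : 0 < f i := lt_of_le_of_ne (hf i) (Ne.symm h)
      have h1 : 0 < f i ^ c := Real.rpow_pos_of_pos hpos c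
      have h2 : f i ^ c ≤ F := Finset.single_le_sum
        (fun j _ => Real.rpow_nonneg (hf j) c) (Finset.mem_univ i)
      linarith [hF0'.symm ▸ h2]
    simp only [hz]
    rw [Finset.sum_const, smul_zero, ← hF0']
    rw [Real.zero_rpow (ne_of_gt h1ρ)]
  · have hterm : ∀ i, f i ≤ f i ^ c * F ^ ρ := by
      intro i
      rcases eq_or_lt_of_le (hf i) with h0 | hpos
      · rw [← h0, Real.zero_rpow (ne_of_gt hc0), zero_mul]
      · have key : f i = f i ^ c * f i ^ (c * ρ) := by
          rw [← Real.rpow_add hpos]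
          rw [show c + c * ρ = c * (1+ρ) by ring, hcmul, Real.rpow_one]
        nth_rewrite 1 [key]
        refine mul_le_mul_of_nonneg_left ?_ (Real.rpow_nonneg (hf i) c)
        rw [Real.rpow_mul (le_of_lt hpos)]
        refine Real.rpow_le_rpow (Real.rpow_nonneg (hf i) c) ?_ hρ0
        exact Finset.single_le_sum (fun j _ => Real.rpow_nonneg (hf j) c) (Finset.mem_univ i)
    calc ∑ i, f i ≤ ∑ i, f i ^ c * F ^ ρ := Finset.sum_le_sum fun i _ => hterm i
      _ = F * F ^ ρ := by rw [← Finset.sum_mul]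
      _ = F ^ (1+ρ) := by
          rw [Real.rpow_add hFpos, Real.rpow_one]

lemma per_y_bound {ι : Type*} [Fintype ι] (f : ι → ℝ) (hf : ∀ i, 0 ≤ f i)
    (p : ι → Prop) (ρ : ℝ) (hρ0 : 0 < ρ) (hρ1 : ρ ≤ 1) (r : ℝ) (hr : 0 < r)
    (hgood : ∀ i, ¬ p i → f i ≠ 0 → r ≤ f i) :
    (∑ i, f i ^ (1/(1+ρ))) ^ (1+ρ) ≤
      4 * ((∑ i, f i) ^ (1+ρ) * r ^ (-ρ) +
        (Fintype.card ι : ℝ) ^ ρ * (∑ i, if p i then f i else 0)) := by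
  have h1ρ : (0:ℝ) < 1 + ρ := by linarith
  set c : ℝ := 1/(1+ρ) with hc
  have hc0 : 0 < c := by positivity
  have hcmul : c * (1+ρ) = 1 := one_div_mul_cancel (ne_of_gt h1ρ)
  have hc1 : c ≤ 1 := by rw [hc, div_le_one h1ρ]; linarith
  set A : ℝ := ∑ i ∈ Finset.univ.filter (fun i => ¬ p i), f i ^ c with hA_def
  set B : ℝ := ∑ i ∈ Finset.univ.filter p, f i ^ c with hB_def
  have hsplit : (∑ i, f i ^ c) = B + A :=
    (Finset.sum_filter_add_sum_filter_not Finset.univ p _).symm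
  have hA0 : 0 ≤ A := Finset.sum_nonneg fun i _ => Real.rpow_nonneg (hf i) c
  have hB0 : 0 ≤ B := Finset.sum_nonneg fun i _ => Real.rpow_nonneg (hf i) c
  set E : ℝ := ∑ i ∈ Finset.univ.filter p, f i with hE_def
  have hE0 : 0 ≤ E := Finset.sum_nonneg fun i _ => hf i
  have hEeq : E = ∑ i, if p i then f i else 0 := by
    rw [hE_def, Finset.sum_filter]
  have hsum0 : 0 ≤ ∑ i, f i := Finset.sum_nonneg fun i _ => hf i
  set M : ℝ := (Fintype.card ι : ℝ) with hM_def
  have hM0 : (0:ℝ) ≤ M := Nat.cast_nonneg _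
  -- bound A
  have hA' : A ^ (1+ρ) ≤ (∑ i, f i) ^ (1+ρ) * r ^ (-ρ) := by
    have hterm : ∀ i ∈ Finset.univ.filter (fun i => ¬ p i),
        f i ^ c ≤ f i * r ^ (-(c*ρ)) := by
      intro i hi
      rcases eq_or_lt_of_le (hf i) with h0 | hpos
      · rw [← h0, Real.zero_rpow (ne_of_gt hc0), zero_mul]
      · have hrf : r ≤ f i :=
          hgood i (Finset.mem_filter.mp hi).2 (ne_of_gt hpos)
        have key : f i ^ c = f i * f i ^ (c - 1) := by
          nth_rewrite 2 [← Real.rpow_one (f i)]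
          rw [← Real.rpow_add hpos]; ring_nf
        rw [key]
        refine mul_le_mul_of_nonneg_left ?_ (le_of_lt hpos)
        rw [show c - 1 = -(c*ρ) by linear_combination hcmul]
        exact Real.rpow_le_rpow_of_nonpos hr hrf
          (neg_nonpos.mpr (by positivity))
    have hAle : A ≤ (∑ i, f i) * r ^ (-(c*ρ)) := by
      calc A ≤ ∑ i ∈ Finset.univ.filter (fun i => ¬ p i), f i * r ^ (-(c*ρ)) :=
            Finset.sum_le_sum hterm
        _ = (∑ i ∈ Finset.univ.filter (fun i => ¬ p i), f i) * r ^ (-(c*ρ)) :=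
            (Finset.sum_mul _ _ _).symm
        _ ≤ (∑ i, f i) * r ^ (-(c*ρ)) := by
            refine mul_le_mul_of_nonneg_right ?_ (Real.rpow_nonneg (le_of_lt hr) _)
            exact Finset.sum_le_sum_of_subset_of_nonneg (Finset.filter_subset _ _)
              (fun i _ _ => hf i)
    calc A ^ (1+ρ) ≤ ((∑ i, f i) * r ^ (-(c*ρ))) ^ (1+ρ) :=
          Real.rpow_le_rpow hA0 hAle (le_of_lt h1ρ)
      _ = (∑ i, f i) ^ (1+ρ) * (r ^ (-(c*ρ))) ^ (1+ρ) :=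
          Real.mul_rpow hsum0 (Real.rpow_nonneg (le_of_lt hr) _)
      _ = (∑ i, f i) ^ (1+ρ) * r ^ (-ρ) := by
          rw [← Real.rpow_mul (le_of_lt hr),
            show (-(c*ρ))*(1+ρ) = -ρ by linear_combination (-ρ) * hcmul]
  -- bound B
  have hB' : B ^ (1+ρ) ≤ M ^ ρ * E := by
    have hBle : B ≤ M ^ (1-c) * E ^ c := by
      refine le_trans (sum_rpow_le_card_rpow_mul _ f (fun i _ => hf i) c hc0 hc1) ?_
      refine mul_le_mul_of_nonneg_right ?_ (Real.rpow_nonneg hE0 c)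
      refine Real.rpow_le_rpow (Nat.cast_nonneg _) ?_ (by linarith)
      rw [hM_def]
      exact_mod_cast le_trans (Finset.card_filter_le _ _) (le_of_eq Finset.card_univ)
    calc B ^ (1+ρ) ≤ (M ^ (1-c) * E ^ c) ^ (1+ρ) :=
          Real.rpow_le_rpow hB0 hBle (le_of_lt h1ρ)
      _ = (M ^ (1-c)) ^ (1+ρ) * (E ^ c) ^ (1+ρ) :=
          Real.mul_rpow (Real.rpow_nonneg hM0 _) (Real.rpow_nonneg hE0 _)
      _ = M ^ ρ * E := by
          rw [← Real.rpow_mul hM0, ← Real.rpow_mul hE0,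
            show (1-c)*(1+ρ) = ρ by linear_combination -hcmul,
            show c*(1+ρ) = 1 from hcmul, Real.rpow_one]
  -- combine
  have hcomb : (B + A) ^ (1+ρ) ≤ 4 * (A ^ (1+ρ) + B ^ (1+ρ)) := by
    have hm0 : 0 ≤ max A B := le_max_of_le_left hA0
    have h1 : B + A ≤ 2 * max A B := by
      rcases le_total A B with h | h
      · rw [max_eq_right h]; linarith
      · rw [max_eq_left h]; linarith
    have h2 : (B + A) ^ (1+ρ) ≤ (2 * max A B) ^ (1+ρ) :=
      Real.rpow_le_rpow (by linarith) h1 (le_of_lt h1ρ)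
    have h3 : (2 * max A B) ^ (1+ρ) = (2:ℝ) ^ (1+ρ) * (max A B) ^ (1+ρ) :=
      Real.mul_rpow (by norm_num) hm0
    have h4 : (2:ℝ) ^ (1+ρ) ≤ 4 := by
      calc (2:ℝ) ^ (1+ρ) ≤ (2:ℝ) ^ (2:ℝ) :=
            Real.rpow_le_rpow_of_exponent_le one_le_two (by linarith)
        _ = 4 := by
            rw [show (2:ℝ) = ((2:ℕ):ℝ) by norm_num, Real.rpow_natCast]; norm_num
    have h5 : (max A B) ^ (1+ρ) ≤ A ^ (1+ρ) + B ^ (1+ρ) := by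
      rcases le_total A B with h | h
      · rw [max_eq_right h]
        exact le_add_of_nonneg_left (Real.rpow_nonneg hA0 _)
      · rw [max_eq_left h]
        exact le_add_of_nonneg_right (Real.rpow_nonneg hB0 _)
    calc (B + A) ^ (1+ρ) ≤ (2:ℝ) ^ (1+ρ) * (max A B) ^ (1+ρ) := by rw [← h3]; exact h2
      _ ≤ 4 * (A ^ (1+ρ) + B ^ (1+ρ)) := by
          refine mul_le_mul h4 h5 (Real.rpow_nonneg hm0 _) (by norm_num)
  rw [hsplit]
  refine le_trans hcomb ?_
  rw [hEeq] at hB'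
  have := add_le_add hA' hB'
  linarith

/-- `Pr[(1/n)·ln(1/P_{Xⁿ|Yⁿ}(Xⁿ|Yⁿ)) > α]` where
`P_{Xⁿ|Yⁿ}(xⁿ|yⁿ) = P_{XⁿYⁿ}(xⁿ,yⁿ)/P_{Yⁿ}(yⁿ)`. -/
noncomputable def prCondSelfInfoGT {𝒳 𝒴 : Type*} [Fintype 𝒳] [Fintype 𝒴]
    (P : (n : ℕ) → (Fin n → 𝒳) → (Fin n → 𝒴) → ℝ) (α : ℝ) (n : ℕ) : ℝ :=
  ∑ x : Fin n → 𝒳, ∑ y : Fin n → 𝒴,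
    if (1 / (n : ℝ)) * Real.log
        (1 / (P n x y / ∑ x' : Fin n → 𝒳, P n x' y)) > α
    then P n x y else 0

/-- The spectral conditional sup-entropy rate `H_sup(X|Y)`. -/
noncomputable def specCondSupEntropy {𝒳 𝒴 : Type*} [Fintype 𝒳] [Fintype 𝒴]
    (P : (n : ℕ) → (Fin n → 𝒳) → (Fin n → 𝒴) → ℝ) : ℝ :=
  sInf {α : ℝ | Tendsto (fun n => prCondSelfInfoGT P α n) atTop (nhds 0)}

/-- The source Gallager function `J₀⁽ⁿ⁾(ρ)`. -/
noncomputable def gallagerJ0 {𝒳 𝒴 : Type*} [Fintype 𝒳] [Fintype 𝒴]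
    (P : (n : ℕ) → (Fin n → 𝒳) → (Fin n → 𝒴) → ℝ) (n : ℕ) (ρ : ℝ) : ℝ :=
  (1 / (n : ℝ)) * Real.log
    (∑ y : Fin n → 𝒴, (∑ x : Fin n → 𝒳, P n x y ^ (1 / (1 + ρ))) ^ (1 + ρ))

/-- The source error exponent `J⁽ⁿ⁾(R) = max_{ρ∈[0,1]} {ρR − J₀⁽ⁿ⁾(ρ)}`. -/
noncomputable def gallagerJ {𝒳 𝒴 : Type*} [Fintype 𝒳] [Fintype 𝒴]
    (P : (n : ℕ) → (Fin n → 𝒳) → (Fin n → 𝒴) → ℝ) (R : ℝ) (n : ℕ) : ℝ :=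
  sSup {v : ℝ | ∃ ρ ∈ Set.Icc (0 : ℝ) 1, v = ρ * R - gallagerJ0 P n ρ}

theorem gallager_source_exponent_tendsto_atTop
    {𝒳 𝒴 : Type*} [Fintype 𝒳] [Fintype 𝒴] [Nonempty 𝒳] [Nonempty 𝒴]
    (P : (n : ℕ) → (Fin n → 𝒳) → (Fin n → 𝒴) → ℝ)
    (hPnn : ∀ n x y, 0 ≤ P n x y)
    (hP1 : ∀ n, ∑ x : Fin n → 𝒳, ∑ y : Fin n → 𝒴, P n x y = 1)
    (R : ℝ) (hR : specCondSupEntropy P < R) :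
    Tendsto (fun n : ℕ => (n : ℝ) * gallagerJ P R n) atTop atTop := by
  have hcard𝒳 : (0:ℝ) < (Fintype.card 𝒳 : ℝ) := by exact_mod_cast Fintype.card_pos
  set L : ℝ := Real.log (Fintype.card 𝒳) with hL_def
  have hL0 : 0 ≤ L := Real.log_nonneg (by exact_mod_cast Fintype.card_pos (α := 𝒳))
  set L' : ℝ := max L 1 with hL'_def
  have hL'1 : 1 ≤ L' := le_max_right _ _
  have hL'0 : 0 < L' := lt_of_lt_of_le one_pos hL'1
  have hLL' : L ≤ L' := le_max_left _ _
  have hQnn : ∀ n (y : Fin n → 𝒴), 0 ≤ ∑ x : Fin n → 𝒳, P n x y :=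
    fun n y => Finset.sum_nonneg fun x _ => hPnn n x y
  have hQ1 : ∀ n, ∑ y : Fin n → 𝒴, ∑ x : Fin n → 𝒳, P n x y = 1 := fun n => by
    rw [Finset.sum_comm]; exact hP1 n
  have hPleQ : ∀ n (x : Fin n → 𝒳) (y : Fin n → 𝒴),
      P n x y ≤ ∑ x' : Fin n → 𝒳, P n x' y :=
    fun n x y => Finset.single_le_sum (fun x' _ => hPnn n x' y) (Finset.mem_univ x)
  have hprnn : ∀ (a : ℝ) (n : ℕ), 0 ≤ prCondSelfInfoGT P a n := by
    intro a n
    refine Finset.sum_nonneg fun x _ => Finset.sum_nonneg fun y _ => ?_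
    split
    · exact hPnn n x y
    · exact le_refl 0
  -- members of the spectral set are nonnegative
  have hSnn : ∀ a ∈ {α : ℝ | Tendsto (fun n => prCondSelfInfoGT P α n) atTop (nhds 0)},
      (0:ℝ) ≤ a := by
    intro a ha
    by_contra hneg
    push_neg at hneg
    have heq : ∀ n, prCondSelfInfoGT P a n = 1 := by
      intro n
      rw [← hP1 n]
      unfold prCondSelfInfoGT
      refine Finset.sum_congr rfl fun x _ => Finset.sum_congr rfl fun y _ => ?_
      rcases eq_or_lt_of_le (hPnn n x y) with h0 | hpos
      · split <;> rw [← h0]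
      · have hQ : 0 < ∑ x' : Fin n → 𝒳, P n x' y := lt_of_lt_of_le hpos (hPleQ n x y)
        have h1 : 1 / (P n x y / ∑ x' : Fin n → 𝒳, P n x' y)
            = (∑ x' : Fin n → 𝒳, P n x' y) / P n x y := one_div_div _ _
        have h2 : (0:ℝ) ≤ (1 / (n : ℝ)) * Real.log
            (1 / (P n x y / ∑ x' : Fin n → 𝒳, P n x' y)) := by
          rw [h1]
          refine mul_nonneg (by positivity) (Real.log_nonneg ?_)
          rw [le_div_iff₀ hpos, one_mul]
          exact hPleQ n x y
        rw [if_pos (lt_of_lt_of_le hneg h2)]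
    have h1 : Tendsto (fun n => prCondSelfInfoGT P a n) atTop (nhds 0) := ha
    have h2 : Tendsto (fun _ : ℕ => (1:ℝ)) atTop (nhds 0) := by
      rwa [show (fun _ : ℕ => (1:ℝ)) = fun n => prCondSelfInfoGT P a n from
        funext fun n => (heq n).symm]
    exact zero_ne_one (tendsto_nhds_unique h2 tendsto_const_nhds)
  -- exp(-n) tendsto 0
  have hexpto : Tendsto (fun n : ℕ => Real.exp (-(n:ℝ))) atTop (nhds 0) :=
    Real.tendsto_exp_atBot.comp (tendsto_neg_atBot_iff.mpr tendsto_natCast_atTop_atTop)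
  -- the set is nonempty: L + 1 belongs to it
  have hmem0 : (L + 1) ∈ {α : ℝ | Tendsto (fun n => prCondSelfInfoGT P α n) atTop (nhds 0)} := by
    have hub : ∀ n : ℕ, 1 ≤ n → prCondSelfInfoGT P (L+1) n ≤ Real.exp (-(n:ℝ)) := by
      intro n hn
      have hn0 : (0:ℝ) < n := by exact_mod_cast hn
      have hM : ((Fintype.card (Fin n → 𝒳) : ℝ)) = Real.exp ((n:ℝ)*L) := by
        have hcfun : Fintype.card (Fin n → 𝒳) = Fintype.card 𝒳 ^ n := by
          rw [Fintype.card_fun, Fintype.card_fin]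
        rw [hcfun]
        push_cast
        rw [Real.exp_nat_mul, Real.exp_log hcard𝒳]
      have key : prCondSelfInfoGT P (L+1) n
          = ∑ y : Fin n → 𝒴, ∑ x : Fin n → 𝒳,
            (if (1 / (n : ℝ)) * Real.log
              (1 / (P n x y / ∑ x' : Fin n → 𝒳, P n x' y)) > L + 1
            then P n x y else 0) := by
        unfold prCondSelfInfoGT; rw [Finset.sum_comm]
      rw [key]
      calc ∑ y : Fin n → 𝒴, ∑ x : Fin n → 𝒳,
            (if (1 / (n : ℝ)) * Real.log
              (1 / (P n x y / ∑ x' : Fin n → 𝒳, P n x' y)) > L + 1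
            then P n x y else 0)
          ≤ ∑ y : Fin n → 𝒴, ∑ _x : Fin n → 𝒳,
            (∑ x' : Fin n → 𝒳, P n x' y) * Real.exp (-(n:ℝ)*(L+1)) := by
            refine Finset.sum_le_sum fun y _ => Finset.sum_le_sum fun x _ => ?_
            by_cases hcond : (1 / (n : ℝ)) * Real.log
              (1 / (P n x y / ∑ x' : Fin n → 𝒳, P n x' y)) > L + 1
            · rw [if_pos hcond]
              rcases eq_or_lt_of_le (hPnn n x y) with h0 | hpos
              · rw [← h0]
                exact mul_nonneg (hQnn n y) (Real.exp_pos _).le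
              · have hQ : 0 < ∑ x' : Fin n → 𝒳, P n x' y :=
                  lt_of_lt_of_le hpos (hPleQ n x y)
                rw [one_div_div, gt_iff_lt] at hcond
                rw [one_div, inv_mul_eq_div, lt_div_iff₀ hn0] at hcond
                have h3 : Real.exp ((L+1)*(n:ℝ)) < (∑ x' : Fin n → 𝒳, P n x' y) / P n x y :=
                  (Real.lt_log_iff_exp_lt (div_pos hQ hpos)).mp hcond
                rw [lt_div_iff₀ hpos] at h3
                rw [show -(n:ℝ)*(L+1) = -((L+1)*(n:ℝ)) by ring, Real.exp_neg,
                  ← div_eq_mul_inv, le_div_iff₀ (Real.exp_pos _)]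
                rw [mul_comm] at h3
                linarith
            · rw [if_neg hcond]
              exact mul_nonneg (hQnn n y) (Real.exp_pos _).le
        _ = ∑ y : Fin n → 𝒴, (Fintype.card (Fin n → 𝒳) : ℝ) *
              ((∑ x' : Fin n → 𝒳, P n x' y) * Real.exp (-(n:ℝ)*(L+1))) := by
            refine Finset.sum_congr rfl fun y _ => ?_
            rw [Finset.sum_const, Finset.card_univ, nsmul_eq_mul]
        _ = (Fintype.card (Fin n → 𝒳) : ℝ) *
              ((∑ y : Fin n → 𝒴, ∑ x' : Fin n → 𝒳, P n x' y) * Real.exp (-(n:ℝ)*(L+1))) := by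
            rw [← Finset.mul_sum, ← Finset.sum_mul]
        _ = Real.exp (-(n:ℝ)) := by
            rw [hQ1 n, one_mul, hM, ← Real.exp_add]
            congr 1
            ring
    refine tendsto_of_tendsto_of_tendsto_of_le_of_le' tendsto_const_nhds hexpto
      (Eventually.of_forall fun n => hprnn _ n) (eventually_atTop.2 ⟨1, hub⟩)
  -- choose α
  rw [specCondSupEntropy] at hR
  obtain ⟨α, hαS, hαR⟩ := exists_lt_of_csInf_lt ⟨L+1, hmem0⟩ hR
  have hα0 : 0 ≤ α := hSnn α hαS
  have hR0 : 0 < R := lt_of_le_of_lt hα0 hαR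
  set ε : ℕ → ℝ := fun n => prCondSelfInfoGT P α n with hε_def
  have hεto : Tendsto ε atTop (nhds 0) := hαS
  have hεnn : ∀ n, 0 ≤ ε n := fun n => hprnn α n
  set η : ℕ → ℝ := fun n => ε n + Real.exp (-(n:ℝ)) with hη_def
  have hη0 : ∀ n, 0 < η n := fun n => add_pos_of_nonneg_of_pos (hεnn n) (Real.exp_pos _)
  have hηto : Tendsto η atTop (nhds 0) := by
    have := hεto.add hexpto
    simpa using this
  have hεη : ∀ n, ε n ≤ η n := fun n => le_add_of_nonneg_right (Real.exp_pos _).le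
  set t : ℕ → ℝ := fun n => -Real.log (η n) with ht_def
  have htto : Tendsto t atTop atTop := by
    have hη_pos_to : Tendsto η atTop (nhdsWithin 0 (Set.Ioi 0)) :=
      tendsto_nhdsWithin_of_tendsto_nhds_of_eventually_within _ hηto
        (Eventually.of_forall fun n => hη0 n)
    exact tendsto_neg_atBot_atTop.comp
      (Real.tendsto_log_nhdsGT_zero.comp hη_pos_to)
  have htn : ∀ n, t n ≤ (n:ℝ) := by
    intro n
    have h1 : -(n:ℝ) ≤ Real.log (η n) := by
      rw [← Real.log_exp (-(n:ℝ))]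
      exact Real.log_le_log (Real.exp_pos _) (le_add_of_nonneg_left (hεnn n))
    simp only [ht_def]
    linarith
  -- J0 lower bounds
  have hSge1 : ∀ (n : ℕ) (ρ : ℝ), 0 ≤ ρ →
      (1:ℝ) ≤ ∑ y : Fin n → 𝒴, (∑ x : Fin n → 𝒳, P n x y ^ (1/(1+ρ))) ^ (1+ρ) := by
    intro n ρ hρ0
    calc (1:ℝ) = ∑ y : Fin n → 𝒴, ∑ x : Fin n → 𝒳, P n x y := (hQ1 n).symm
      _ ≤ ∑ y : Fin n → 𝒴, (∑ x : Fin n → 𝒳, P n x y ^ (1/(1+ρ))) ^ (1+ρ) :=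
          Finset.sum_le_sum fun y _ =>
            sum_le_rpow_sum_rpow (fun x => P n x y) (fun x => hPnn n x y) ρ hρ0
  have hJ0nn : ∀ (n : ℕ) (ρ : ℝ), 0 ≤ ρ → 0 ≤ gallagerJ0 P n ρ := by
    intro n ρ hρ0
    exact mul_nonneg (by positivity) (Real.log_nonneg (hSge1 n ρ hρ0))
  -- main per-n estimate
  have main : ∀ n : ℕ, 1 ≤ n → 0 < t n →
      min ((R - α)/(2*L')) (1/2) * t n - Real.log 8 ≤ (n:ℝ) * gallagerJ P R n := by
    intro n hn ht
    have hn0 : (0:ℝ) < n := by exact_mod_cast hn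
    set ρ : ℝ := t n / (2*(n:ℝ)*L') with hρdef
    have hρ0 : 0 < ρ := div_pos ht (by positivity)
    have hρ1 : ρ ≤ 1 := by
      rw [hρdef, div_le_one (by positivity)]
      calc t n ≤ (n:ℝ) := htn n
        _ ≤ 2*(n:ℝ)*L' := by nlinarith
    set Sv : ℝ := ∑ y : Fin n → 𝒴, (∑ x : Fin n → 𝒳, P n x y ^ (1/(1+ρ))) ^ (1+ρ)
      with hSv_def
    have hSv1 : (1:ℝ) ≤ Sv := hSge1 n ρ hρ0.le
    -- upper bound on Sv
    have hSle : Sv ≤ 4*(Real.exp (((n:ℝ)*ρ)*α) + Real.exp (((n:ℝ)*ρ)*L') * ε n) := by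
      have hy : ∀ y : Fin n → 𝒴,
          (∑ x : Fin n → 𝒳, P n x y ^ (1/(1+ρ))) ^ (1+ρ) ≤
          4 * ((∑ x : Fin n → 𝒳, P n x y) * Real.exp (((n:ℝ)*ρ)*α) +
            Real.exp (((n:ℝ)*ρ)*L') *
            (∑ x : Fin n → 𝒳, if (1 / (n : ℝ)) * Real.log
                (1 / (P n x y / ∑ x' : Fin n → 𝒳, P n x' y)) > α
              then P n x y else 0)) := by
        intro y
        have hE0 : (0:ℝ) ≤ ∑ x : Fin n → 𝒳, (if (1 / (n : ℝ)) * Real.log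
              (1 / (P n x y / ∑ x' : Fin n → 𝒳, P n x' y)) > α then P n x y else 0) := by
          refine Finset.sum_nonneg fun x _ => ?_
          split
          · exact hPnn n x y
          · exact le_refl 0
        have h1ρ : (0:ℝ) < 1 + ρ := by linarith
        rcases eq_or_lt_of_le (hQnn n y) with hQ0 | hQpos
        · -- marginal vanishes
          have hz : ∀ x : Fin n → 𝒳, P n x y = 0 := by
            intro x
            have h1 := hPleQ n x y
            have h2 := hPnn n x y
            linarith [hQ0]
          have hlhs : (∑ x : Fin n → 𝒳, P n x y ^ (1/(1+ρ))) ^ (1+ρ) = 0 := by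
            have hzz : ∀ x : Fin n → 𝒳, P n x y ^ (1/(1+ρ)) = 0 := fun x => by
              rw [hz x, Real.zero_rpow (by positivity)]
            rw [Finset.sum_congr rfl fun x _ => hzz x, Finset.sum_const, smul_zero,
              Real.zero_rpow (ne_of_gt h1ρ)]
          rw [hlhs]
          refine mul_nonneg (by norm_num) (add_nonneg ?_ ?_)
          · exact mul_nonneg (hQnn n y) (Real.exp_pos _).le
          · exact mul_nonneg (Real.exp_pos _).le hE0
        · -- positive marginal
          have hgood : ∀ x : Fin n → 𝒳,
              ¬ ((1 / (n : ℝ)) * Real.log (1 / (P n x y / ∑ x' : Fin n → 𝒳, P n x' y)) > α) →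
              P n x y ≠ 0 →
              (∑ x' : Fin n → 𝒳, P n x' y) * Real.exp (-((n:ℝ)*α)) ≤ P n x y := by
            intro x hncond hne
            have hpos : 0 < P n x y := lt_of_le_of_ne (hPnn n x y) (Ne.symm hne)
            rw [one_div_div] at hncond
            push_neg at hncond
            rw [one_div, inv_mul_eq_div, div_le_iff₀ hn0] at hncond
            have h2 : (∑ x' : Fin n → 𝒳, P n x' y) / P n x y ≤ Real.exp (α*(n:ℝ)) :=
              (Real.log_le_iff_le_exp (div_pos hQpos hpos)).mp hncond
            rw [div_le_iff₀ hpos] at h2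
            rw [show -((n:ℝ)*α) = -(α*(n:ℝ)) by ring, Real.exp_neg,
              ← div_eq_mul_inv, div_le_iff₀ (Real.exp_pos _)]
            exact le_of_le_of_eq h2 (mul_comm _ _)
          have hkey := per_y_bound (fun x => P n x y) (fun x => hPnn n x y)
            (fun x => (1 / (n : ℝ)) * Real.log
              (1 / (P n x y / ∑ x' : Fin n → 𝒳, P n x' y)) > α)
            ρ hρ0 hρ1 ((∑ x' : Fin n → 𝒳, P n x' y) * Real.exp (-((n:ℝ)*α)))
            (mul_pos hQpos (Real.exp_pos _)) hgood
          refine le_trans hkey ?_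
          have hQr : (∑ x : Fin n → 𝒳, P n x y) ^ (1+ρ) *
              ((∑ x' : Fin n → 𝒳, P n x' y) * Real.exp (-((n:ℝ)*α))) ^ (-ρ)
              = (∑ x : Fin n → 𝒳, P n x y) * Real.exp (((n:ℝ)*ρ)*α) := by
            rw [Real.mul_rpow hQpos.le (Real.exp_pos _).le, ← Real.exp_mul, ← mul_assoc,
              ← Real.rpow_add hQpos, show (1+ρ) + (-ρ) = (1:ℝ) by ring, Real.rpow_one,
              show -((n:ℝ)*α) * (-ρ) = ((n:ℝ)*ρ)*α by ring]
          have hMle : ((Fintype.card (Fin n → 𝒳) : ℝ)) ^ ρ ≤ Real.exp (((n:ℝ)*ρ)*L') := by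
            have hM : ((Fintype.card (Fin n → 𝒳) : ℝ)) = Real.exp ((n:ℝ)*L) := by
              have hcfun : Fintype.card (Fin n → 𝒳) = Fintype.card 𝒳 ^ n := by
                rw [Fintype.card_fun, Fintype.card_fin]
              rw [hcfun]
              push_cast
              rw [Real.exp_nat_mul, Real.exp_log hcard𝒳]
            rw [hM, ← Real.exp_mul]
            refine Real.exp_le_exp.mpr ?_
            nlinarith [mul_nonneg (mul_nonneg hn0.le hρ0.le) (sub_nonneg.mpr hLL')]
          have h2 : ((Fintype.card (Fin n → 𝒳) : ℝ)) ^ ρ *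
              (∑ x : Fin n → 𝒳, if (1 / (n : ℝ)) * Real.log
                (1 / (P n x y / ∑ x' : Fin n → 𝒳, P n x' y)) > α
              then P n x y else 0) ≤
              Real.exp (((n:ℝ)*ρ)*L') *
              (∑ x : Fin n → 𝒳, if (1 / (n : ℝ)) * Real.log
                (1 / (P n x y / ∑ x' : Fin n → 𝒳, P n x' y)) > α
              then P n x y else 0) :=
            mul_le_mul_of_nonneg_right hMle hE0
          linarith [hQr, h2]
      have hEsum : ∑ y : Fin n → 𝒴, (∑ x : Fin n → 𝒳, if (1 / (n : ℝ)) * Real.log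
            (1 / (P n x y / ∑ x' : Fin n → 𝒳, P n x' y)) > α
          then P n x y else 0) = ε n := by
        rw [hε_def]
        unfold prCondSelfInfoGT
        rw [Finset.sum_comm]
      calc Sv ≤ ∑ y : Fin n → 𝒴,
            4 * ((∑ x : Fin n → 𝒳, P n x y) * Real.exp (((n:ℝ)*ρ)*α) +
              Real.exp (((n:ℝ)*ρ)*L') *
              (∑ x : Fin n → 𝒳, if (1 / (n : ℝ)) * Real.log
                  (1 / (P n x y / ∑ x' : Fin n → 𝒳, P n x' y)) > α
                then P n x y else 0)) := Finset.sum_le_sum fun y _ => hy y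
        _ = 4*(Real.exp (((n:ℝ)*ρ)*α) + Real.exp (((n:ℝ)*ρ)*L') * ε n) := by
            rw [← Finset.mul_sum]
            congr 1
            rw [Finset.sum_add_distrib, ← Finset.sum_mul, ← Finset.mul_sum, hQ1 n,
              one_mul, hEsum]
    -- gallagerJ bound
    have hlogS : (n:ℝ) * gallagerJ0 P n ρ = Real.log Sv := by
      rw [hSv_def]
      unfold gallagerJ0
      field_simp
    have hbdd : BddAbove {v : ℝ | ∃ ρ' ∈ Set.Icc (0:ℝ) 1, v = ρ' * R - gallagerJ0 P n ρ'} := by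
      refine ⟨|R|, fun v hv => ?_⟩
      obtain ⟨ρ', hρ', rfl⟩ := hv
      have h1 := hJ0nn n ρ' hρ'.1
      have h2 : ρ' * R ≤ |R| := by
        calc ρ' * R ≤ 1 * |R| :=
              mul_le_mul hρ'.2 (le_abs_self R) hR0.le (by norm_num)
          _ = |R| := one_mul _
      linarith
    have hmem : ρ * R - gallagerJ0 P n ρ ∈
        {v : ℝ | ∃ ρ' ∈ Set.Icc (0:ℝ) 1, v = ρ' * R - gallagerJ0 P n ρ'} :=
      ⟨ρ, ⟨hρ0.le, hρ1⟩, rfl⟩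
    have step1 : ρ * R - gallagerJ0 P n ρ ≤ gallagerJ P R n := le_csSup hbdd hmem
    have step2 : (n:ℝ) * (ρ * R) - Real.log Sv ≤ (n:ℝ) * gallagerJ P R n := by
      have := mul_le_mul_of_nonneg_left step1 hn0.le
      rw [mul_sub, hlogS] at this
      exact this
    -- log bound
    have hSvpos : (0:ℝ) < Sv := lt_of_lt_of_le one_pos hSv1
    have hlog : Real.log Sv ≤ Real.log 8 +
        max (((n:ℝ)*ρ)*α) (((n:ℝ)*ρ)*L' + Real.log (η n)) := by
      set e1 : ℝ := Real.exp (((n:ℝ)*ρ)*α) with he1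
      set e2 : ℝ := Real.exp (((n:ℝ)*ρ)*L') with he2
      have hmaxpos : 0 < max e1 (e2 * η n) :=
        lt_of_lt_of_le (Real.exp_pos _) (le_max_left _ _)
      have h8 : Sv ≤ 8 * max e1 (e2 * η n) := by
        have hεη' : e2 * ε n ≤ e2 * η n :=
          mul_le_mul_of_nonneg_left (hεη n) (Real.exp_pos _).le
        have h4 : Sv ≤ 4*(e1 + e2 * η n) := by
          refine le_trans hSle ?_
          linarith
        rcases le_total e1 (e2 * η n) with h | h
        · rw [max_eq_right h]; linarith
        · rw [max_eq_left h]; linarith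
      have hlog1 := Real.log_le_log hSvpos h8
      rw [Real.log_mul (by norm_num) (ne_of_gt hmaxpos)] at hlog1
      rcases le_total e1 (e2 * η n) with h | h
      · rw [max_eq_right h, Real.log_mul (Real.exp_ne_zero _) (ne_of_gt (hη0 n)),
          Real.log_exp] at hlog1
        exact le_trans hlog1 (add_le_add le_rfl (le_max_right _ _))
      · rw [max_eq_left h, Real.log_exp] at hlog1
        exact le_trans hlog1 (add_le_add le_rfl (le_max_left _ _))
    -- arithmetic
    have hu : (n:ℝ)*ρ = t n / (2*L') := by
      rw [hρdef]
      field_simp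
    have hlogη : Real.log (η n) = - t n := by simp [ht_def]
    have huL' : ((n:ℝ)*ρ) * L' = t n / 2 := by
      rw [hu]
      field_simp
    have huR : 0 ≤ ((n:ℝ)*ρ) * R := mul_nonneg (by positivity) hR0.le
    have hmin1 : min ((R - α)/(2*L')) (1/2) * t n ≤ ((R - α)/(2*L')) * t n :=
      mul_le_mul_of_nonneg_right (min_le_left _ _) ht.le
    have hmin2 : min ((R - α)/(2*L')) (1/2) * t n ≤ (1/2) * t n :=
      mul_le_mul_of_nonneg_right (min_le_right _ _) ht.le
    have heq1 : ((n:ℝ)*ρ) * (R - α) = ((R - α)/(2*L')) * t n := by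
      rw [hu]; ring
    rcases le_total (((n:ℝ)*ρ)*α) (((n:ℝ)*ρ)*L' + Real.log (η n)) with h | h
    · rw [max_eq_right h] at hlog
      have : min ((R - α)/(2*L')) (1/2) * t n - Real.log 8 ≤ (n:ℝ) * (ρ * R) - Real.log Sv := by
        rw [show (n:ℝ) * (ρ * R) = ((n:ℝ)*ρ)*R by ring]
        rw [hlogη] at hlog
        rw [huL'] at hlog
        linarith
      exact le_trans this step2
    · rw [max_eq_left h] at hlog
      have : min ((R - α)/(2*L')) (1/2) * t n - Real.log 8 ≤ (n:ℝ) * (ρ * R) - Real.log Sv := by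
        rw [show (n:ℝ) * (ρ * R) = ((n:ℝ)*ρ)*R by ring]
        have hsplit : ((n:ℝ)*ρ)*R - ((n:ℝ)*ρ)*α = ((n:ℝ)*ρ)*(R-α) := by ring
        have := heq1
        linarith
      exact le_trans this step2
  -- conclusion
  have hc : 0 < min ((R - α)/(2*L')) (1/2) :=
    lt_min (div_pos (by linarith) (by positivity)) one_half_pos
  have hlim : Tendsto (fun n => min ((R - α)/(2*L')) (1/2) * t n - Real.log 8) atTop atTop := by
    simp only [sub_eq_add_neg]
    exact tendsto_atTop_add_const_right _ _ (htto.const_mul_atTop hc)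
  refine tendsto_atTop_mono' atTop ?_ hlim
  filter_upwards [eventually_ge_atTop 1, htto.eventually_gt_atTop 0] with n hn ht'
  exact main n hn ht'
end

section
/- Let A and B be finite nonempty sets and P a probability mass function on A × B. For ρ ∈ [0,1] define φ(ρ) = ln Σ_{y∈B} ( Σ_{x∈A} P(x,y)^{1/(1+ρ)} )^{1+ρ}, and define the tilted joint probability mass function P̄_ρ(x,y) = P(x,y)^{1/(1+ρ)} · ( Σ_{x'∈A} P(x',y)^{1/(1+ρ)} )^{ρ} / Σ_{y'∈B} ( Σ_{x'∈A} P(x',y')^{1/(1+ρ)} )^{1+ρ}. Assume P(x,y) > 0 for all (x,y). Then φ is differentiable on [0,1] and φ'(ρ) = H(X̄(ρ)|Ȳ(ρ)), the conditional Shannon entropy (in nats) of the first coordinate given the second under P̄_ρ, i.e., φ'(ρ) = −Σ_{x,y} P̄_ρ(x,y)·ln( P̄_ρ(x,y)/Σ_{x'} P̄_ρ(x',y) ). -/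
open Real

theorem deriv_source_gallager_eq_cond_entropy
    {A B : Type*} [Fintype A] [Fintype B] [Nonempty A] [Nonempty B]
    (P : A → B → ℝ) (hpos : ∀ x y, 0 < P x y)
    (hsum : ∑ x, ∑ y, P x y = 1)
    (φ : ℝ → ℝ)
    (hφ : ∀ ρ : ℝ, φ ρ =
      Real.log (∑ y, (∑ x, P x y ^ (1 / (1 + ρ))) ^ (1 + ρ)))
    (Pb : ℝ → A → B → ℝ)
    (hPb : ∀ ρ x y, Pb ρ x y =
      P x y ^ (1 / (1 + ρ)) * (∑ x', P x' y ^ (1 / (1 + ρ))) ^ ρ /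
        ∑ y', (∑ x', P x' y' ^ (1 / (1 + ρ))) ^ (1 + ρ)) :
    ∀ ρ ∈ Set.Icc (0 : ℝ) 1,
      HasDerivAt φ
        (-∑ x, ∑ y, Pb ρ x y * Real.log (Pb ρ x y / ∑ x', Pb ρ x' y)) ρ := by
  intro ρ hρ
  have h1 : (0:ℝ) < 1 + ρ := by have := hρ.1; linarith
  have h1' : (1:ℝ) + ρ ≠ 0 := h1.ne'
  -- derivative of u ↦ 1/(1+u)
  have hDt : HasDerivAt (fun u : ℝ => 1 / (1 + u)) (-(1 / (1 + ρ) ^ 2)) ρ := by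
    have h : HasDerivAt (fun u : ℝ => 1 + u) 1 ρ := by
      simpa using (hasDerivAt_id ρ).const_add (1:ℝ)
    have := h.inv h1'
    simpa [one_div, neg_div, Pi.inv_def] using this
  -- derivative of u ↦ P x y ^ (1/(1+u))
  have hP : ∀ x y, HasDerivAt (fun u : ℝ => P x y ^ (1 / (1 + u)))
      (P x y ^ (1 / (1 + ρ)) * Real.log (P x y) * (-(1 / (1 + ρ) ^ 2))) ρ := by
    intro x y
    have := ((hasStrictDerivAt_const_rpow (hpos x y) (1 / (1 + ρ))).hasDerivAt).comp ρ hDt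
    simpa [Function.comp_def, mul_comm, mul_assoc, mul_left_comm] using this
  have hGd : ∀ y, HasDerivAt (fun u : ℝ => ∑ x, P x y ^ (1 / (1 + u)))
      (∑ x, P x y ^ (1 / (1 + ρ)) * Real.log (P x y) * (-(1 / (1 + ρ) ^ 2))) ρ :=
    fun y => HasDerivAt.fun_sum (fun x _ => hP x y)
  have hGpos : ∀ y, 0 < ∑ x, P x y ^ (1 / (1 + ρ)) :=
    fun y => Finset.sum_pos (fun x _ => Real.rpow_pos_of_pos (hpos x y) _) Finset.univ_nonempty
  have hone : HasDerivAt (fun u : ℝ => 1 + u) 1 ρ := by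
    simpa using (hasDerivAt_id ρ).const_add (1:ℝ)
  have hfd : ∀ y, HasDerivAt (fun u : ℝ => (∑ x, P x y ^ (1 / (1 + u))) ^ (1 + u))
      ((∑ x, P x y ^ (1 / (1 + ρ)) * Real.log (P x y) * (-(1 / (1 + ρ) ^ 2))) * (1 + ρ) *
          (∑ x, P x y ^ (1 / (1 + ρ))) ^ ((1 + ρ) - 1) +
        1 * (∑ x, P x y ^ (1 / (1 + ρ))) ^ (1 + ρ) *
          Real.log (∑ x, P x y ^ (1 / (1 + ρ)))) ρ :=
    fun y => (hGd y).rpow hone (hGpos y)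
  have hFd : HasDerivAt (fun u : ℝ => ∑ y, (∑ x, P x y ^ (1 / (1 + u))) ^ (1 + u))
      (∑ y, ((∑ x, P x y ^ (1 / (1 + ρ)) * Real.log (P x y) * (-(1 / (1 + ρ) ^ 2))) * (1 + ρ) *
          (∑ x, P x y ^ (1 / (1 + ρ))) ^ ((1 + ρ) - 1) +
        1 * (∑ x, P x y ^ (1 / (1 + ρ))) ^ (1 + ρ) *
          Real.log (∑ x, P x y ^ (1 / (1 + ρ))))) ρ :=
    HasDerivAt.fun_sum (fun y _ => hfd y)
  have hFpos : 0 < ∑ y, (∑ x, P x y ^ (1 / (1 + ρ))) ^ (1 + ρ) :=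
    Finset.sum_pos (fun y _ => Real.rpow_pos_of_pos (hGpos y) _) Finset.univ_nonempty
  have hlogd := hFd.log hFpos.ne'
  have hφf : φ = fun u => Real.log (∑ y, (∑ x, P x y ^ (1 / (1 + u))) ^ (1 + u)) := funext hφ
  rw [hφf]
  convert hlogd using 1
  -- the algebraic identity
  have hGpow : ∀ y, (∑ x, P x y ^ (1 / (1 + ρ))) ^ (1 + ρ) =
      (∑ x, P x y ^ (1 / (1 + ρ))) * (∑ x, P x y ^ (1 / (1 + ρ))) ^ ρ := by
    intro y
    rw [Real.rpow_add (hGpos y), Real.rpow_one]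
  set t : ℝ := 1 / (1 + ρ) with ht
  set F : ℝ := ∑ y, (∑ x, P x y ^ t) ^ (1 + ρ) with hFdef
  have hF' : F ≠ 0 := hFpos.ne'
  have hsumx : ∀ y, (∑ x', Pb ρ x' y) = (∑ x, P x y ^ t) ^ (1 + ρ) / F := by
    intro y
    simp only [hPb, ← ht, ← hFdef]
    rw [← Finset.sum_div, ← Finset.sum_mul, hGpow]
  have hratio : ∀ x y, Pb ρ x y / (∑ x', Pb ρ x' y) = P x y ^ t / (∑ x, P x y ^ t) := by
    intro x y
    rw [hsumx, hPb, ← ht, ← hFdef, hGpow]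
    have hg := (hGpos y).ne'
    have hgr : (∑ x, P x y ^ t) ^ ρ ≠ 0 := (Real.rpow_pos_of_pos (hGpos y) ρ).ne'
    field_simp
  have hlogr : ∀ x y, Real.log (P x y ^ t / (∑ x, P x y ^ t)) =
      t * Real.log (P x y) - Real.log (∑ x, P x y ^ t) := by
    intro x y
    rw [Real.log_div (Real.rpow_pos_of_pos (hpos x y) t).ne' (hGpos y).ne',
      Real.log_rpow (hpos x y)]
  calc -∑ x, ∑ y, Pb ρ x y * Real.log (Pb ρ x y / ∑ x', Pb ρ x' y)
      = -∑ y, ∑ x, (P x y ^ t * (∑ x', P x' y ^ t) ^ ρ / F) *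
          (t * Real.log (P x y) - Real.log (∑ x', P x' y ^ t)) := by
        rw [Finset.sum_comm]
        congr 1
        refine Finset.sum_congr rfl fun y _ => Finset.sum_congr rfl fun x _ => ?_
        rw [hratio, hlogr, hPb, ← ht, ← hFdef]
    _ = ∑ y, (((∑ x, P x y ^ t * Real.log (P x y) * (-(1 / (1 + ρ) ^ 2))) * (1 + ρ) *
          (∑ x, P x y ^ t) ^ ((1 + ρ) - 1) +
        1 * (∑ x, P x y ^ t) ^ (1 + ρ) * Real.log (∑ x, P x y ^ t)) / F) := by
        rw [← Finset.sum_neg_distrib]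
        refine Finset.sum_congr rfl fun y _ => ?_
        have he : (1 + ρ) - 1 = ρ := by ring
        rw [he, hGpow]
        calc -∑ x, (P x y ^ t * (∑ x', P x' y ^ t) ^ ρ / F) *
              (t * Real.log (P x y) - Real.log (∑ x', P x' y ^ t))
            = ∑ x, ((P x y ^ t * Real.log (P x y)) * (-(t) * (∑ x', P x' y ^ t) ^ ρ / F) +
                (P x y ^ t) * (Real.log (∑ x', P x' y ^ t) * (∑ x', P x' y ^ t) ^ ρ / F)) := by
              rw [← Finset.sum_neg_distrib]
              exact Finset.sum_congr rfl fun x _ => by ring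
          _ = (∑ x, P x y ^ t * Real.log (P x y)) * (-(t) * (∑ x, P x y ^ t) ^ ρ / F) +
              (∑ x, P x y ^ t) * (Real.log (∑ x, P x y ^ t) * (∑ x, P x y ^ t) ^ ρ / F) := by
              rw [Finset.sum_add_distrib, ← Finset.sum_mul, ← Finset.sum_mul]
          _ = ((∑ x, P x y ^ t * Real.log (P x y) * (-(1 / (1 + ρ) ^ 2))) * (1 + ρ) *
                (∑ x, P x y ^ t) ^ ρ +
              1 * ((∑ x, P x y ^ t) * (∑ x, P x y ^ t) ^ ρ) * Real.log (∑ x, P x y ^ t)) / F := by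
              rw [← Finset.sum_mul]
              rw [ht]
              field_simp
    _ = _ := by rw [Finset.sum_div]
end

section
/- Let A and B be finite nonempty sets and P a probability mass function on A × B with P(x,y) > 0 for all (x,y). For ρ ∈ [0,1] define φ(ρ) = ln Σ_{y∈B} ( Σ_{x∈A} P(x,y)^{1/(1+ρ)} )^{1+ρ}, the tilted joint probability mass function P̄_ρ(x,y) = P(x,y)^{1/(1+ρ)} · ( Σ_{x'∈A} P(x',y)^{1/(1+ρ)} )^{ρ} / Σ_{y'∈B} ( Σ_{x'∈A} P(x',y')^{1/(1+ρ)} )^{1+ρ}, its conditional entropy h(ρ) = H(X̄(ρ)|Ȳ(ρ)) under P̄_ρ, and J(R) = max_{ρ∈[0,1]} { ρ·R − φ(ρ) }. If h(0) < R < h(1) (note h(0) = H(X|Y) under P, since P̄_0 = P), then there exists ρ_0 ∈ (0,1) with h(ρ_0) = R and J(R) = ρ_0·R − φ(ρ_0). -/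
open Real

theorem source_exponent_attained_at_matching_rate
    {A B : Type*} [Fintype A] [Fintype B] [Nonempty A] [Nonempty B]
    (P : A → B → ℝ) (hpos : ∀ x y, 0 < P x y)
    (hsum : ∑ x, ∑ y, P x y = 1)
    (φ : ℝ → ℝ)
    (hφ : ∀ ρ : ℝ, φ ρ =
      Real.log (∑ y, (∑ x, P x y ^ (1 / (1 + ρ))) ^ (1 + ρ)))
    (Pb : ℝ → A → B → ℝ)
    (hPb : ∀ ρ x y, Pb ρ x y =
      P x y ^ (1 / (1 + ρ)) * (∑ x', P x' y ^ (1 / (1 + ρ))) ^ ρ /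
        ∑ y', (∑ x', P x' y' ^ (1 / (1 + ρ))) ^ (1 + ρ))
    (h : ℝ → ℝ)
    (hh : ∀ ρ : ℝ, h ρ =
      -∑ x, ∑ y, Pb ρ x y * Real.log (Pb ρ x y / ∑ x', Pb ρ x' y))
    (J : ℝ → ℝ)
    (hJ : ∀ R : ℝ, J R = sSup {v : ℝ | ∃ ρ ∈ Set.Icc (0 : ℝ) 1, v = ρ * R - φ ρ})
    (R : ℝ) (hR0 : h 0 < R) (hR1 : R < h 1) :
    ∃ ρ₀ ∈ Set.Ioo (0 : ℝ) 1, h ρ₀ = R ∧ J R = ρ₀ * R - φ ρ₀ := by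
  classical
  -- the key derivative fact: φ' = h on [0,1]
  have key : ∀ ρ ∈ Set.Icc (0:ℝ) 1, HasDerivAt φ (h ρ) ρ := by
    intro ρ hρ
    have hT : (0:ℝ) < 1 + ρ := by linarith [hρ.1]
    set s : ℝ := 1 / (1 + ρ) with hsdef
    have hα : ∀ y, (0:ℝ) < ∑ x, P x y ^ s :=
      fun y => Finset.sum_pos (fun x _ => rpow_pos_of_pos (hpos x y) _) Finset.univ_nonempty
    have hg : (0:ℝ) < ∑ y, (∑ x, P x y ^ s) ^ (1 + ρ) :=
      Finset.sum_pos (fun y _ => rpow_pos_of_pos (hα y) _) Finset.univ_nonempty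
    -- derivative of t ↦ 1/(1+t)
    have hds : HasDerivAt (fun t : ℝ => 1 / (1 + t)) (-(1 / (1 + ρ) ^ 2)) ρ := by
      have h1 : HasDerivAt (fun t : ℝ => 1 + t) 1 ρ := (hasDerivAt_id ρ).const_add 1
      have h2 := h1.inv (by positivity : (1:ℝ) + ρ ≠ 0)
      have hfe : (fun t : ℝ => 1 / (1 + t)) = fun t : ℝ => ((1:ℝ) + t)⁻¹ := by
        funext t; rw [one_div]
      rw [hfe]
      exact h2.congr_deriv (by ring)
    -- derivative of t ↦ P x y ^ (1/(1+t))
    have hinner : ∀ x y, HasDerivAt (fun t : ℝ => P x y ^ (1 / (1 + t)))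
        (-(1 / (1 + ρ) ^ 2) * P x y ^ s * Real.log (P x y)) ρ := by
      intro x y
      have h0 := (hasDerivAt_const ρ (P x y)).rpow hds
        (show (0:ℝ) < (fun _ : ℝ => P x y) ρ from hpos x y)
      convert h0 using 1
      rw [hsdef]
      ring
    -- derivative of t ↦ α y t
    have hαd : ∀ y, HasDerivAt (fun t : ℝ => ∑ x, P x y ^ (1 / (1 + t)))
        (∑ x, -(1 / (1 + ρ) ^ 2) * P x y ^ s * Real.log (P x y)) ρ :=
      fun y => HasDerivAt.fun_sum (fun x _ => hinner x y)
    -- derivative of the y-term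
    have hterm : ∀ y, HasDerivAt (fun t : ℝ => (∑ x, P x y ^ (1 / (1 + t))) ^ (1 + t))
        ((∑ x, -(1 / (1 + ρ) ^ 2) * P x y ^ s * Real.log (P x y)) * (1 + ρ) *
          (∑ x, P x y ^ s) ^ ((1 + ρ) - 1)
        + 1 * (∑ x, P x y ^ s) ^ (1 + ρ) * Real.log (∑ x, P x y ^ s)) ρ := by
      intro y
      exact (hαd y).rpow ((hasDerivAt_id ρ).const_add 1)
        (show (0:ℝ) < ∑ x, P x y ^ (1 / (1 + ρ)) from hα y)
    have hgd : HasDerivAt (fun t : ℝ => ∑ y, (∑ x, P x y ^ (1 / (1 + t))) ^ (1 + t))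
        (∑ y, ((∑ x, -(1 / (1 + ρ) ^ 2) * P x y ^ s * Real.log (P x y)) * (1 + ρ) *
          (∑ x, P x y ^ s) ^ ((1 + ρ) - 1)
        + 1 * (∑ x, P x y ^ s) ^ (1 + ρ) * Real.log (∑ x, P x y ^ s))) ρ :=
      HasDerivAt.fun_sum (fun y _ => hterm y)
    have hφd : HasDerivAt φ
        ((∑ y, ((∑ x, -(1 / (1 + ρ) ^ 2) * P x y ^ s * Real.log (P x y)) * (1 + ρ) *
          (∑ x, P x y ^ s) ^ ((1 + ρ) - 1)
        + 1 * (∑ x, P x y ^ s) ^ (1 + ρ) * Real.log (∑ x, P x y ^ s))) /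
          ∑ y, (∑ x, P x y ^ s) ^ (1 + ρ)) ρ := by
      have hfun : φ = fun t => Real.log (∑ y, (∑ x, P x y ^ (1 / (1 + t))) ^ (1 + t)) :=
        funext hφ
      rw [hfun]
      exact hgd.log hg.ne'
    -- now identify the value of the derivative with h ρ
    convert hφd using 1
    -- conditional marginal of Pb
    have hPbsum : ∀ y, (∑ x', Pb ρ x' y) = (∑ x, P x y ^ s) ^ (1 + ρ) /
        ∑ y', (∑ x', P x' y' ^ s) ^ (1 + ρ) := by
      intro y
      simp only [hPb]
      rw [← Finset.sum_div, ← Finset.sum_mul]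
      congr 1
      rw [Real.rpow_add (hα y), Real.rpow_one]
    have hPbratio : ∀ x y, Pb ρ x y / (∑ x', Pb ρ x' y) = P x y ^ s / (∑ x', P x' y ^ s) := by
      intro x y
      rw [hPbsum, hPb, ← hsdef]
      have e1 : (∑ x', P x' y ^ s) ^ (1 + ρ) = (∑ x', P x' y ^ s) * (∑ x', P x' y ^ s) ^ ρ := by
        rw [Real.rpow_add (hα y), Real.rpow_one]
      rw [e1]
      have h1 : (0:ℝ) < ∑ x', P x' y ^ s := hα y
      have h2 : (0:ℝ) < (∑ x', P x' y ^ s) ^ ρ := rpow_pos_of_pos h1 ρ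
      field_simp
    rw [hh, Finset.sum_comm]
    have hterm2 : ∀ y x, Pb ρ x y * Real.log (Pb ρ x y / ∑ x', Pb ρ x' y) =
        (P x y ^ s * ((∑ x', P x' y ^ s) ^ ρ *
          (s * Real.log (P x y) - Real.log (∑ x', P x' y ^ s)))) /
          ∑ y', (∑ x', P x' y' ^ s) ^ (1 + ρ) := by
      intro y x
      rw [hPbratio, hPb, Real.log_div (rpow_pos_of_pos (hpos x y) s).ne' (hα y).ne',
        Real.log_rpow (hpos x y)]
      ring
    simp only [hterm2]
    simp only [← Finset.sum_div]
    rw [← neg_div]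
    congr 1
    rw [← Finset.sum_neg_distrib]
    refine Finset.sum_congr rfl (fun y _ => ?_)
    rw [← Finset.sum_neg_distrib]
    rw [show (1:ℝ) + ρ - 1 = ρ by ring]
    rw [show (∑ x, P x y ^ s) ^ (1 + ρ) = (∑ x, P x y ^ s) * (∑ x, P x y ^ s) ^ ρ by
      rw [Real.rpow_add (hα y), Real.rpow_one]]
    rw [one_mul, Finset.sum_mul, Finset.sum_mul, Finset.sum_mul, Finset.sum_mul,
      ← Finset.sum_add_distrib]
    refine Finset.sum_congr rfl (fun x _ => ?_)
    have hc : -(1 / (1 + ρ) ^ 2) * (1 + ρ) = -s := by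
      rw [hsdef]; field_simp
    rw [hsdef]
    field_simp
    ring
  -- the function to maximize
  set f : ℝ → ℝ := fun ρ => ρ * R - φ ρ with hf
  have hfd : ∀ ρ ∈ Set.Icc (0:ℝ) 1, HasDerivAt f (R - h ρ) ρ :=
    fun ρ hρ => (hasDerivAt_mul_const R).sub (key ρ hρ)
  have hcont : ContinuousOn f (Set.Icc (0:ℝ) 1) :=
    fun ρ hρ => ((hfd ρ hρ).continuousAt).continuousWithinAt
  obtain ⟨ρ₀, hρ₀mem, hmax⟩ :=
    isCompact_Icc.exists_isMaxOn (Set.nonempty_Icc.2 zero_le_one) hcont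
  -- there is a point with larger value than f 0
  have h0lt : ∃ t ∈ Set.Icc (0:ℝ) 1, f 0 < f t := by
    have hd0 : HasDerivAt f (R - h 0) 0 := hfd 0 ⟨le_refl 0, zero_le_one⟩
    have hslope := hasDerivAt_iff_tendsto_slope.1 hd0
    have hpos' : (0:ℝ) < R - h 0 := by linarith
    have hev : ∀ᶠ t in nhdsWithin (0:ℝ) (Set.Ioi 0), 0 < slope f 0 t := by
      have := hslope.mono_left (nhdsWithin_mono 0 (fun t ht => ne_of_gt ht))
      exact this.eventually (eventually_gt_nhds hpos')
    have hev2 : ∀ᶠ t in nhdsWithin (0:ℝ) (Set.Ioi 0), t ∈ Set.Ioc (0:ℝ) 1 := by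
      have : Set.Ioc (0:ℝ) 1 ∈ nhdsWithin (0:ℝ) (Set.Ioi 0) :=
        Ioc_mem_nhdsGT_of_mem ⟨le_refl 0, zero_lt_one⟩
      exact this
    obtain ⟨t, ht1, ht2⟩ := (hev.and hev2).exists
    refine ⟨t, ⟨ht2.1.le, ht2.2⟩, ?_⟩
    have : 0 < (f t - f 0) / (t - 0) := by
      simpa [slope_def_field, div_eq_mul_inv] using ht1
    have htpos : (0:ℝ) < t - 0 := by simpa using ht2.1
    have h3 : 0 < f t - f 0 := by
      have h4 := mul_pos this htpos
      rwa [div_mul_cancel₀ _ htpos.ne'] at h4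
    linarith
  have h1lt : ∃ t ∈ Set.Icc (0:ℝ) 1, f 1 < f t := by
    have hd1 : HasDerivAt f (R - h 1) 1 := hfd 1 ⟨zero_le_one, le_refl 1⟩
    have hslope := hasDerivAt_iff_tendsto_slope.1 hd1
    have hneg' : R - h 1 < 0 := by linarith
    have hev : ∀ᶠ t in nhdsWithin (1:ℝ) (Set.Iio 1), slope f 1 t < 0 := by
      have := hslope.mono_left (nhdsWithin_mono 1 (fun t ht => ne_of_lt ht))
      exact this.eventually (eventually_lt_nhds hneg')
    have hev2 : ∀ᶠ t in nhdsWithin (1:ℝ) (Set.Iio 1), t ∈ Set.Ico (0:ℝ) 1 := by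
      have : Set.Ico (0:ℝ) 1 ∈ nhdsWithin (1:ℝ) (Set.Iio 1) :=
        Ico_mem_nhdsLT_of_mem ⟨zero_lt_one, le_refl 1⟩
      exact this
    obtain ⟨t, ht1, ht2⟩ := (hev.and hev2).exists
    refine ⟨t, ⟨ht2.1, ht2.2.le⟩, ?_⟩
    have : (f t - f 1) / (t - 1) < 0 := by
      simpa [slope_def_field, div_eq_mul_inv] using ht1
    have htneg : t - 1 < 0 := by linarith [ht2.2]
    have h3 : 0 < f t - f 1 := by
      have h4 := mul_pos_of_neg_of_neg this htneg
      rwa [div_mul_cancel₀ _ htneg.ne] at h4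
    linarith
  -- the maximizer is interior
  have hne0 : ρ₀ ≠ 0 := by
    rintro rfl
    obtain ⟨t, htmem, htlt⟩ := h0lt
    exact absurd (hmax htmem) (not_le.2 htlt)
  have hne1 : ρ₀ ≠ 1 := by
    rintro rfl
    obtain ⟨t, htmem, htlt⟩ := h1lt
    exact absurd (hmax htmem) (not_le.2 htlt)
  have hIoo : ρ₀ ∈ Set.Ioo (0:ℝ) 1 :=
    ⟨lt_of_le_of_ne hρ₀mem.1 (Ne.symm hne0), lt_of_le_of_ne hρ₀mem.2 hne1⟩
  -- derivative at interior maximum is zero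
  have hloc : IsLocalMax f ρ₀ :=
    hmax.isLocalMax (Icc_mem_nhds hIoo.1 hIoo.2)
  have hzero : R - h ρ₀ = 0 := hloc.hasDerivAt_eq_zero (hfd ρ₀ hρ₀mem)
  refine ⟨ρ₀, hIoo, by linarith, ?_⟩
  rw [hJ]
  apply le_antisymm
  · have hne : {v : ℝ | ∃ ρ ∈ Set.Icc (0 : ℝ) 1, v = ρ * R - φ ρ}.Nonempty :=
      ⟨ρ₀ * R - φ ρ₀, ⟨ρ₀, hρ₀mem, rfl⟩⟩
    refine csSup_le hne ?_
    rintro v ⟨ρ, hρ, rfl⟩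
    exact hmax hρ
  · refine le_csSup ⟨ρ₀ * R - φ ρ₀, ?_⟩ ⟨ρ₀, hρ₀mem, rfl⟩
    rintro v ⟨ρ, hρ, rfl⟩
    exact hmax hρ
end

section
/- Let 𝒜 and ℬ be finite nonempty sets, W a channel assigning to each x ∈ 𝒜 a probability mass function W(·|x) on ℬ, Q a probability mass function on 𝒜, M ≥ 2 an integer, and ρ ∈ [0,1]. Then there exist an encoder f : {1,…,M} → 𝒜 and a decoder φ : ℬ → {1,…,M} such that the average decoding error probability satisfies (1/M)·Σ_{m=1}^{M} Σ_{y : φ(y) ≠ m} W(y|f(m)) ≤ (M−1)^{ρ} · Σ_{y∈ℬ} ( Σ_{x∈𝒜} Q(x)·W(y|x)^{1/(1+ρ)} )^{1+ρ}. -/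
open scoped Classical

open Finset

section GallagerAux

variable {𝒜 : Type*} [Fintype 𝒜]

lemma gal_prod_sum_one {κ : Type*} [Fintype κ] [DecidableEq κ] (Q : 𝒜 → ℝ)
    (hQ1 : ∑ x, Q x = 1) :
    ∑ g : κ → 𝒜, ∏ j, Q (g j) = 1 := by
  rw [← Fintype.prod_sum (fun (_ : κ) (x : 𝒜) => Q x)]
  simp [hQ1]

lemma gal_indep_factor {ι : Type*} [Fintype ι] [DecidableEq ι]
    (Q : 𝒜 → ℝ) (hQ1 : ∑ x, Q x = 1) (m : ι) (A : 𝒜 → ℝ)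
    (B : ({j : ι // j ≠ m} → 𝒜) → ℝ) :
    ∑ f : ι → 𝒜, (∏ j, Q (f j)) * (A (f m) * B (fun j => f j.1))
      = (∑ x, Q x * A x) * ∑ g : {j : ι // j ≠ m} → 𝒜, (∏ j, Q (g j)) * B g := by
  set e := Equiv.piSplitAt m (fun _ : ι => 𝒜) with he
  rw [← Equiv.sum_comp e.symm
      (fun f : ι → 𝒜 => (∏ j, Q (f j)) * (A (f m) * B (fun j => f j.1)))]
  rw [Fintype.sum_prod_type, Finset.sum_mul]
  refine Finset.sum_congr rfl fun x _ => ?_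
  rw [Finset.mul_sum]
  refine Finset.sum_congr rfl fun g _ => ?_
  have hm : e.symm (x, g) m = x := by simp [he, Equiv.piSplitAt]
  have hne : ∀ (j : {j : ι // j ≠ m}), e.symm (x, g) j.1 = g j := by
    intro j
    simp [he, Equiv.piSplitAt, j.2]
  have hprod : ∏ j, Q (e.symm (x, g) j) = Q x * ∏ j : {j : ι // j ≠ m}, Q (g j) := by
    rw [Fintype.prod_eq_mul_prod_compl m (fun j => Q (e.symm (x, g) j)), hm]
    congr 1
    rw [Finset.prod_subtype ({m}ᶜ : Finset ι)
      (p := fun j => j ≠ m) (by intro j; simp) (fun j => Q (e.symm (x, g) j))]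
    exact Finset.prod_congr rfl fun j _ => by rw [hne j]
  have hB : (fun j : {j : ι // j ≠ m} => e.symm (x, g) j.1) = g := funext fun j => hne j
  simp only [hprod, hm, hB]
  ring

lemma gal_coord {κ : Type*} [Fintype κ] [DecidableEq κ]
    (Q : 𝒜 → ℝ) (hQ1 : ∑ x, Q x = 1) (i : κ) (h : 𝒜 → ℝ) :
    ∑ g : κ → 𝒜, (∏ j, Q (g j)) * h (g i) = ∑ x, Q x * h x := by
  have hh := gal_indep_factor Q hQ1 i h (fun _ => (1 : ℝ))
  simp only [mul_one] at hh
  rw [hh, gal_prod_sum_one (κ := {j : κ // j ≠ i}) Q hQ1, mul_one]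

end GallagerAux

lemma gal_jensen {ι : Type*} [Fintype ι] (w t : ι → ℝ) (hw : ∀ i, 0 ≤ w i)
    (hw1 : ∑ i, w i = 1) (ht : ∀ i, 0 ≤ t i) {ρ : ℝ} (hρ0 : 0 ≤ ρ) (hρ1 : ρ ≤ 1) :
    ∑ i, w i * t i ^ ρ ≤ (∑ i, w i * t i) ^ ρ := by
  rcases eq_or_lt_of_le hρ0 with h0 | h0
  · simp [← h0, hw1]
  · have h1p : 1 ≤ 1 / ρ := by
      rw [le_div_iff₀ h0]; linarith
    have key := Real.arith_mean_le_rpow_mean Finset.univ w (fun i => t i ^ ρ)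
      (fun i _ => hw i) hw1 (fun i _ => Real.rpow_nonneg (ht i) ρ) h1p
    have hsimp : ∀ i : ι, (t i ^ ρ) ^ (1 / ρ) = t i := by
      intro i
      rw [← Real.rpow_mul (ht i), mul_one_div, div_self (ne_of_gt h0), Real.rpow_one]
    simp only [hsimp, one_div_one_div] at key
    exact key

lemma gal_exists_le {ι : Type*} [Fintype ι] [Nonempty ι] (P E : ι → ℝ)
    (hP : ∀ i, 0 ≤ P i) (hP1 : ∑ i, P i = 1) {C : ℝ}
    (h : ∑ i, P i * E i ≤ C) : ∃ i, E i ≤ C := by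
  by_contra hc
  push_neg at hc
  obtain ⟨i0, hi0⟩ : ∃ i, 0 < P i := by
    by_contra hn
    push_neg at hn
    have hz : ∑ i, P i = 0 :=
      Finset.sum_eq_zero fun i _ => le_antisymm (hn i) (hP i)
    rw [hz] at hP1; norm_num at hP1
  have hCeq : C = ∑ i, P i * C := by rw [← Finset.sum_mul, hP1, one_mul]
  have hlt : ∑ i, P i * C < ∑ i, P i * E i :=
    Finset.sum_lt_sum (fun i _ => mul_le_mul_of_nonneg_left (hc i).le (hP i))
      ⟨i0, Finset.mem_univ i0, mul_lt_mul_of_pos_left (hc i0) hi0⟩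
  linarith

set_option maxHeartbeats 1000000 in
theorem gallager_random_coding_bound
    {𝒜 ℬ : Type*} [Fintype 𝒜] [Fintype ℬ] [Nonempty 𝒜] [Nonempty ℬ]
    (W : 𝒜 → ℬ → ℝ) (hWnn : ∀ x y, 0 ≤ W x y) (hW1 : ∀ x, ∑ y, W x y = 1)
    (Q : 𝒜 → ℝ) (hQnn : ∀ x, 0 ≤ Q x) (hQ1 : ∑ x, Q x = 1)
    (M : ℕ) (hM : 2 ≤ M)
    (ρ : ℝ) (hρ : ρ ∈ Set.Icc (0 : ℝ) 1) :
    ∃ f : Fin M → 𝒜, ∃ φ : ℬ → Fin M,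
      (1 / (M : ℝ)) * ∑ m : Fin M, ∑ y : ℬ, (if φ y ≠ m then W (f m) y else 0)
        ≤ ((M : ℝ) - 1) ^ ρ *
          ∑ y, (∑ x, Q x * W x y ^ (1 / (1 + ρ))) ^ (1 + ρ) := by
  obtain ⟨hρ0, hρ1⟩ := hρ
  have hM0 : (0 : ℝ) < M := by
    have : (2 : ℝ) ≤ M := by exact_mod_cast hM
    linarith
  have hM1 : (0 : ℝ) ≤ (M : ℝ) - 1 := by
    have : (2 : ℝ) ≤ M := by exact_mod_cast hM
    linarith
  have h1ρ : (0 : ℝ) < 1 + ρ := by linarith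
  set s : ℝ := 1 / (1 + ρ) with hs
  have hs0 : 0 ≤ s := by positivity
  have hsum1 : s + s * ρ = 1 := by
    rw [hs]
    field_simp
  haveI : Nonempty (Fin M) := ⟨⟨0, by omega⟩⟩
  -- ML decoder existence
  have hdec : ∀ (f : Fin M → 𝒜) (y : ℬ), ∃ m0 : Fin M, ∀ m, W (f m) y ≤ W (f m0) y := by
    intro f y
    obtain ⟨m0, _, h⟩ := Finset.exists_max_image Finset.univ
      (fun m : Fin M => W (f m) y) Finset.univ_nonempty
    exact ⟨m0, fun m => h m (Finset.mem_univ m)⟩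
  let φ : (Fin M → 𝒜) → ℬ → Fin M := fun f y => (hdec f y).choose
  set a : ℬ → ℝ := fun y => ∑ x, Q x * W x y ^ s with ha
  have ha0 : ∀ y, 0 ≤ a y := fun y =>
    Finset.sum_nonneg fun x _ => mul_nonneg (hQnn x) (Real.rpow_nonneg (hWnn x y) s)
  set P : (Fin M → 𝒜) → ℝ := fun f => ∏ j, Q (f j) with hP
  have hPnn : ∀ f, 0 ≤ P f := fun f => Finset.prod_nonneg fun j _ => hQnn _
  have hP1 : ∑ f, P f = 1 := gal_prod_sum_one Q hQ1
  -- pointwise error bound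
  have point : ∀ (f : Fin M → 𝒜) (m : Fin M) (y : ℬ),
      (if φ f y ≠ m then W (f m) y else 0)
        ≤ W (f m) y ^ s * (∑ m' : {j : Fin M // j ≠ m}, W (f m'.1) y ^ s) ^ ρ := by
    intro f m y
    set T := ∑ m' : {j : Fin M // j ≠ m}, W (f m'.1) y ^ s with hT
    have hTnn : 0 ≤ T :=
      Finset.sum_nonneg fun _ _ => Real.rpow_nonneg (hWnn _ _) _
    by_cases hφ : φ f y ≠ m
    · rw [if_pos hφ]
      have hle : W (f m) y ≤ W (f (φ f y)) y := (hdec f y).choose_spec m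
      have h2 : W (f (φ f y)) y ^ s ≤ T :=
        Finset.single_le_sum
          (f := fun m' : {j : Fin M // j ≠ m} => W (f m'.1) y ^ s)
          (fun _ _ => Real.rpow_nonneg (hWnn _ _) _)
          (Finset.mem_univ (⟨φ f y, hφ⟩ : {j : Fin M // j ≠ m}))
      have h3 : W (f m) y ^ (s * ρ) ≤ T ^ ρ := by
        rw [Real.rpow_mul (hWnn _ _)]
        exact Real.rpow_le_rpow (Real.rpow_nonneg (hWnn _ _) _)
          ((Real.rpow_le_rpow (hWnn _ _) hle hs0).trans h2) hρ0
      calc W (f m) y = W (f m) y ^ (s + s * ρ) := by rw [hsum1, Real.rpow_one]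
        _ = W (f m) y ^ s * W (f m) y ^ (s * ρ) :=
            Real.rpow_add' (hWnn _ _) (by rw [hsum1]; norm_num)
        _ ≤ W (f m) y ^ s * T ^ ρ :=
            mul_le_mul_of_nonneg_left h3 (Real.rpow_nonneg (hWnn _ _) _)
    · rw [if_neg hφ]
      exact mul_nonneg (Real.rpow_nonneg (hWnn _ _) _) (Real.rpow_nonneg hTnn _)
  -- per (m, y) expectation bound
  have permy : ∀ (m : Fin M) (y : ℬ),
      ∑ f : Fin M → 𝒜, P f *
          (W (f m) y ^ s * (∑ m' : {j : Fin M // j ≠ m}, W (f m'.1) y ^ s) ^ ρ)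
        ≤ ((M : ℝ) - 1) ^ ρ * a y ^ (1 + ρ) := by
    intro m y
    have hfac := gal_indep_factor Q hQ1 m (fun x => W x y ^ s)
      (fun g : {j : Fin M // j ≠ m} → 𝒜 =>
        (∑ m' : {j : Fin M // j ≠ m}, W (g m') y ^ s) ^ ρ)
    have hcard : ((Fintype.card {j : Fin M // j ≠ m} : ℕ) : ℝ) = (M : ℝ) - 1 := by
      have h1 : Fintype.card {j : Fin M // j ≠ m} = M - 1 := by
        rw [Fintype.card_subtype_compl, Fintype.card_subtype_eq, Fintype.card_fin]
      rw [h1, Nat.cast_sub (by omega), Nat.cast_one]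
    have hEt : ∑ g : {j : Fin M // j ≠ m} → 𝒜,
        (∏ j, Q (g j)) * (∑ m' : {j : Fin M // j ≠ m}, W (g m') y ^ s)
          = ((M : ℝ) - 1) * a y := by
      simp_rw [Finset.mul_sum]
      rw [Finset.sum_comm]
      have : ∀ m' : {j : Fin M // j ≠ m},
          ∑ g : {j : Fin M // j ≠ m} → 𝒜, (∏ j, Q (g j)) * W (g m') y ^ s = a y := by
        intro m'
        exact gal_coord Q hQ1 m' (fun x => W x y ^ s)
      rw [Finset.sum_congr rfl fun m' _ => this m', Finset.sum_const, Finset.card_univ,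
        nsmul_eq_mul, hcard]
    have hj : ∑ g : {j : Fin M // j ≠ m} → 𝒜,
        (∏ j, Q (g j)) * (∑ m' : {j : Fin M // j ≠ m}, W (g m') y ^ s) ^ ρ
          ≤ (((M : ℝ) - 1) * a y) ^ ρ := by
      rw [← hEt]
      exact gal_jensen _ _ (fun g => Finset.prod_nonneg fun j _ => hQnn _)
        (gal_prod_sum_one Q hQ1)
        (fun g => Finset.sum_nonneg fun _ _ => Real.rpow_nonneg (hWnn _ _) _)
        hρ0 hρ1
    calc ∑ f : Fin M → 𝒜, P f *
            (W (f m) y ^ s * (∑ m' : {j : Fin M // j ≠ m}, W (f m'.1) y ^ s) ^ ρ)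
        = a y * ∑ g : {j : Fin M // j ≠ m} → 𝒜,
            (∏ j, Q (g j)) * (∑ m' : {j : Fin M // j ≠ m}, W (g m') y ^ s) ^ ρ := hfac
      _ ≤ a y * (((M : ℝ) - 1) * a y) ^ ρ := mul_le_mul_of_nonneg_left hj (ha0 y)
      _ = ((M : ℝ) - 1) ^ ρ * a y ^ (1 + ρ) := by
          rw [Real.mul_rpow hM1 (ha0 y),
            Real.rpow_add' (ha0 y) (by positivity : (1 : ℝ) + ρ ≠ 0), Real.rpow_one]
          ring
  -- the averaged bound
  have key : ∑ f : Fin M → 𝒜, P f *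
      ((1 / (M : ℝ)) * ∑ m : Fin M, ∑ y : ℬ, (if φ f y ≠ m then W (f m) y else 0))
        ≤ ((M : ℝ) - 1) ^ ρ * ∑ y, a y ^ (1 + ρ) := by
    have step1 : ∑ f : Fin M → 𝒜, P f *
        ((1 / (M : ℝ)) * ∑ m : Fin M, ∑ y : ℬ, (if φ f y ≠ m then W (f m) y else 0))
          = (1 / (M : ℝ)) * ∑ f : Fin M → 𝒜, P f *
              ∑ m : Fin M, ∑ y : ℬ, (if φ f y ≠ m then W (f m) y else 0) := by
      rw [Finset.mul_sum]
      exact Finset.sum_congr rfl fun f _ => by ring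
    rw [step1]
    have step2 : ∑ f : Fin M → 𝒜, P f *
        ∑ m : Fin M, ∑ y : ℬ, (if φ f y ≠ m then W (f m) y else 0)
          ≤ ∑ f : Fin M → 𝒜, P f *
            ∑ m : Fin M, ∑ y : ℬ,
              W (f m) y ^ s * (∑ m' : {j : Fin M // j ≠ m}, W (f m'.1) y ^ s) ^ ρ :=
      Finset.sum_le_sum fun f _ => mul_le_mul_of_nonneg_left
        (Finset.sum_le_sum fun m _ => Finset.sum_le_sum fun y _ => point f m y)
        (hPnn f)
    have step3 : ∑ f : Fin M → 𝒜, P f *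
        ∑ m : Fin M, ∑ y : ℬ,
          W (f m) y ^ s * (∑ m' : {j : Fin M // j ≠ m}, W (f m'.1) y ^ s) ^ ρ
          = ∑ m : Fin M, ∑ y : ℬ, ∑ f : Fin M → 𝒜, P f *
              (W (f m) y ^ s * (∑ m' : {j : Fin M // j ≠ m}, W (f m'.1) y ^ s) ^ ρ) := by
      simp_rw [Finset.mul_sum]
      rw [Finset.sum_comm]
      exact Finset.sum_congr rfl fun m _ => Finset.sum_comm
    have step4 : ∑ m : Fin M, ∑ y : ℬ, ∑ f : Fin M → 𝒜, P f *
          (W (f m) y ^ s * (∑ m' : {j : Fin M // j ≠ m}, W (f m'.1) y ^ s) ^ ρ)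
        ≤ ∑ m : Fin M, ∑ y : ℬ, ((M : ℝ) - 1) ^ ρ * a y ^ (1 + ρ) :=
      Finset.sum_le_sum fun m _ => Finset.sum_le_sum fun y _ => permy m y
    have step5 : ∑ m : Fin M, ∑ y : ℬ, ((M : ℝ) - 1) ^ ρ * a y ^ (1 + ρ)
        = (M : ℝ) * (((M : ℝ) - 1) ^ ρ * ∑ y, a y ^ (1 + ρ)) := by
      rw [Finset.sum_const, Finset.card_univ, Fintype.card_fin, nsmul_eq_mul,
        Finset.mul_sum]
      simp only [Finset.mul_sum]
    calc (1 / (M : ℝ)) * ∑ f : Fin M → 𝒜, P f *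
          ∑ m : Fin M, ∑ y : ℬ, (if φ f y ≠ m then W (f m) y else 0)
        ≤ (1 / (M : ℝ)) * ((M : ℝ) * (((M : ℝ) - 1) ^ ρ * ∑ y, a y ^ (1 + ρ))) := by
          apply mul_le_mul_of_nonneg_left _ (by positivity)
          rw [← step5]
          exact (step2.trans (le_of_eq step3)).trans step4
      _ = ((M : ℝ) - 1) ^ ρ * ∑ y, a y ^ (1 + ρ) := by
          field_simp
  obtain ⟨f, hf⟩ := gal_exists_le P
    (fun f => (1 / (M : ℝ)) * ∑ m : Fin M, ∑ y : ℬ, (if φ f y ≠ m then W (f m) y else 0))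
    hPnn hP1 key
  exact ⟨f, φ f, hf⟩
end

section
/- Let W be a general channel with finite input alphabet 𝒳 and finite output alphabet 𝒴, and let C(W) = sup_X I_inf(X;Y) be its capacity, the supremum over all general sources X over 𝒳 (with Y the corresponding output). Then for every rate R with 0 < R < C(W), there exists for each n an encoder f_n : {1,…,M_n} → 𝒳^n with M_n = ⌈e^{nR}⌉ messages and a decoder φ_n : 𝒴^n → {1,…,M_n} such that the average decoding error probability P_e^{(n)} = (1/M_n)·Σ_{m=1}^{M_n} Σ_{y^n : φ_n(y^n) ≠ m} W^n(y^n|f_n(m)) tends to 0 as n → ∞. -/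
open Real Filter
open scoped Classical

section Helpers
variable {ι A : Type*} [Fintype ι] [DecidableEq ι] [Fintype A]

lemma sum_pi_prod (Q : ι → A → ℝ) :
    ∑ f : ι → A, ∏ i, Q i (f i) = ∏ i, ∑ x, Q i x :=
  (Fintype.prod_sum Q).symm

lemma prod_eq_single_of_one (t : ι → ℝ) (m : ι) (h : ∀ i, i ≠ m → t i = 1) :
    ∏ i, t i = t m := by
  rw [← Finset.mul_prod_erase Finset.univ _ (Finset.mem_univ m), Finset.prod_eq_one, mul_one]
  exact fun i hi => h i (Finset.ne_of_mem_erase hi)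

lemma prod_eq_pair_of_one (t : ι → ℝ) {m m' : ι} (hmm : m ≠ m')
    (h : ∀ i, i ≠ m → i ≠ m' → t i = 1) :
    ∏ i, t i = t m * t m' := by
  rw [← Finset.mul_prod_erase Finset.univ _ (Finset.mem_univ m)]
  have hm' : m' ∈ Finset.univ.erase m := Finset.mem_erase.2 ⟨hmm.symm, Finset.mem_univ m'⟩
  rw [← Finset.mul_prod_erase _ _ hm', Finset.prod_eq_one, mul_one]
  exact fun i hi => h i (Finset.ne_of_mem_erase (Finset.mem_of_mem_erase hi))
    (Finset.ne_of_mem_erase hi)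

lemma expect_one (P : A → ℝ) (hP1 : ∑ x, P x = 1) (m : ι) (g : A → ℝ) :
    ∑ f : ι → A, (∏ i, P (f i)) * g (f m) = ∑ x, P x * g x := by
  calc ∑ f : ι → A, (∏ i, P (f i)) * g (f m)
      = ∑ f : ι → A, ∏ i, (P (f i) * if i = m then g (f i) else 1) := by
        refine Finset.sum_congr rfl fun f _ => ?_
        rw [Finset.prod_mul_distrib]
        congr 1
        rw [prod_eq_single_of_one _ m (fun i hi => if_neg hi), if_pos rfl]
    _ = ∏ i, ∑ x, (P x * if i = m then g x else 1) :=
        sum_pi_prod (fun i x => P x * if i = m then g x else 1)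
    _ = ∑ x, P x * g x := by
        rw [prod_eq_single_of_one _ m (fun i hi => by simp [if_neg hi, hP1])]
        simp

lemma expect_two (P : A → ℝ) (hP1 : ∑ x, P x = 1) {m m' : ι} (hmm : m ≠ m')
    (g g' : A → ℝ) :
    ∑ f : ι → A, (∏ i, P (f i)) * (g (f m) * g' (f m'))
      = (∑ x, P x * g x) * (∑ x, P x * g' x) := by
  calc ∑ f : ι → A, (∏ i, P (f i)) * (g (f m) * g' (f m'))
      = ∑ f : ι → A, ∏ i, (P (f i) * if i = m then g (f i) else if i = m' then g' (f i) else 1) := by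
        refine Finset.sum_congr rfl fun f _ => ?_
        rw [Finset.prod_mul_distrib]
        congr 1
        rw [prod_eq_pair_of_one _ hmm (fun i h1 h2 => by simp [h1, h2]),
          if_pos rfl, if_neg hmm.symm, if_pos rfl]
    _ = ∏ i, ∑ x, (P x * if i = m then g x else if i = m' then g' x else 1) :=
        sum_pi_prod (fun i x => P x * if i = m then g x else if i = m' then g' x else 1)
    _ = (∑ x, P x * g x) * (∑ x, P x * g' x) := by
        rw [prod_eq_pair_of_one _ hmm (fun i h1 h2 => by simp [h1, h2, hP1]),
          ]
        simp [if_neg hmm.symm]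

lemma exists_le_of_avg {α : Type*} [Fintype α] (q r : α → ℝ)
    (hq0 : ∀ a, 0 ≤ q a) (hq1 : ∑ a, q a = 1) (B : ℝ)
    (h : ∑ a, q a * r a ≤ B) : ∃ a, r a ≤ B := by
  by_contra h'
  push_neg at h'
  obtain ⟨a0, ha0⟩ : ∃ a, 0 < q a := by
    by_contra hq
    push_neg at hq
    have : ∑ a : α, q a = 0 :=
      Finset.sum_eq_zero fun a _ => le_antisymm (hq a) (hq0 a)
    rw [this] at hq1; norm_num at hq1
  have hlt : ∑ a : α, q a * B < ∑ a : α, q a * r a := by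
    apply Finset.sum_lt_sum
    · exact fun a _ => mul_le_mul_of_nonneg_left (h' a).le (hq0 a)
    · exact ⟨a0, Finset.mem_univ a0, mul_lt_mul_of_pos_left (h' a0) ha0⟩
  rw [← Finset.sum_mul, hq1, one_mul] at hlt
  linarith

end Helpers

open scoped Classical in
lemma exists_good_code {A B : Type*} [Fintype A] [Fintype B]
    (M : ℕ) (hM : 0 < M)
    (Wn : A → B → ℝ) (hWnn : ∀ x y, 0 ≤ Wn x y) (hW1 : ∀ x, ∑ y, Wn x y = 1)
    (P : A → ℝ) (hP0 : ∀ x, 0 ≤ P x) (hP1 : ∑ x, P x = 1)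
    (cond : A → B → Prop) (ε : ℝ) (hε : 0 ≤ ε)
    (hcond : ∀ x y, cond x y → (∑ x', P x' * Wn x' y) ≤ ε * Wn x y) :
    ∃ f : Fin M → A, ∃ φ : B → Fin M,
      (1 / (M : ℝ)) * ∑ m, ∑ y, (if φ y ≠ m then Wn (f m) y else 0)
        ≤ (∑ x, ∑ y, if ¬ cond x y then P x * Wn x y else 0) + (M : ℝ) * ε := by
  set Abar : ℝ := ∑ x, ∑ y, if ¬ cond x y then P x * Wn x y else 0 with hAbar
  set φf : (Fin M → A) → B → Fin M := fun f y =>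
    if h : ∃ m, cond (f m) y then h.choose else ⟨0, hM⟩ with hφf
  set err : (Fin M → A) → ℝ := fun f =>
    ∑ m, ∑ y, (if φf f y ≠ m then Wn (f m) y else 0) with herr
  set Q : (Fin M → A) → ℝ := fun f => ∏ m, P (f m) with hQ
  have hQ0 : ∀ f, 0 ≤ Q f := fun f => Finset.prod_nonneg fun i _ => hP0 (f i)
  have hQ1 : ∑ f : Fin M → A, Q f = 1 := by
    simp only [hQ]
    rw [sum_pi_prod (fun _ x => P x)]
    simp [hP1]
  have hite_nn : ∀ (x : A) (y : B) (p : Prop) [Decidable p],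
      (0:ℝ) ≤ if p then Wn x y else 0 := by
    intro x y p _
    split
    · exact hWnn x y
    · exact le_rfl
  -- pointwise error bound
  have hpt : ∀ f : Fin M → A, ∀ m y,
      (if φf f y ≠ m then Wn (f m) y else 0)
        ≤ (if ¬ cond (f m) y then Wn (f m) y else 0)
          + ∑ m' ∈ Finset.univ.erase m, (if cond (f m') y then Wn (f m) y else 0) := by
    intro f m y
    have hsum_nn : 0 ≤ ∑ m' ∈ Finset.univ.erase m,
        (if cond (f m') y then Wn (f m) y else 0) :=
      Finset.sum_nonneg fun m' _ => hite_nn _ _ _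
    by_cases hne : φf f y ≠ m
    · rw [if_pos hne]
      by_cases hc : cond (f m) y
      · have hex : ∃ m'', cond (f m'') y := ⟨m, hc⟩
        have hchoose : cond (f (φf f y)) y := by
          rw [hφf]; simp only [dif_pos hex]; exact hex.choose_spec
        have hmem : φf f y ∈ Finset.univ.erase m :=
          Finset.mem_erase.2 ⟨hne, Finset.mem_univ _⟩
        have hsingle : (if cond (f (φf f y)) y then Wn (f m) y else 0)
            ≤ ∑ m' ∈ Finset.univ.erase m, (if cond (f m') y then Wn (f m) y else 0) :=
          Finset.single_le_sum (f := fun m' => if cond (f m') y then Wn (f m) y else 0)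
            (fun m' _ => hite_nn _ _ _) hmem
        rw [if_pos hchoose] at hsingle
        have h0 : (0:ℝ) ≤ if ¬ cond (f m) y then Wn (f m) y else 0 := hite_nn _ _ _
        linarith
      · rw [if_pos hc]
        linarith
    · rw [if_neg hne]
      have h0 : (0:ℝ) ≤ if ¬ cond (f m) y then Wn (f m) y else 0 := hite_nn _ _ _
      linarith
  -- expected error bound
  have hexp : ∑ f : Fin M → A, Q f * err f ≤ (M : ℝ) * (Abar + (M : ℝ) * ε) := by
    have hBbar : ∀ m m' : Fin M, m ≠ m' →
        ∑ f : Fin M → A, Q f * (∑ y, if cond (f m') y then Wn (f m) y else 0) ≤ ε := by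
      intro m m' hmm
      have hrw : ∑ f : Fin M → A, Q f * (∑ y, if cond (f m') y then Wn (f m) y else 0)
          = ∑ y : B, (∑ x, P x * Wn x y) * (∑ x', P x' * if cond x' y then 1 else 0) := by
        calc ∑ f : Fin M → A, Q f * (∑ y, if cond (f m') y then Wn (f m) y else 0)
            = ∑ f : Fin M → A, ∑ y : B,
                Q f * ((fun x => Wn x y) (f m) * (fun x' => if cond x' y then (1:ℝ) else 0) (f m')) := by
              refine Finset.sum_congr rfl fun f _ => ?_
              rw [Finset.mul_sum]
              refine Finset.sum_congr rfl fun y _ => ?_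
              by_cases hc : cond (f m') y <;> simp [hc]
          _ = ∑ y : B, ∑ f : Fin M → A,
                Q f * ((fun x => Wn x y) (f m) * (fun x' => if cond x' y then (1:ℝ) else 0) (f m')) :=
              Finset.sum_comm
          _ = ∑ y : B, (∑ x, P x * Wn x y) * (∑ x', P x' * if cond x' y then 1 else 0) :=
              Finset.sum_congr rfl fun y _ =>
                expect_two P hP1 hmm (fun x => Wn x y) (fun x' => if cond x' y then (1:ℝ) else 0)
      rw [hrw]
      have step1 : ∀ y : B, (∑ x, P x * Wn x y) * (∑ x', P x' * if cond x' y then (1:ℝ) else 0)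
          ≤ ∑ x', ε * (P x' * Wn x' y) := by
        intro y
        rw [Finset.mul_sum]
        refine Finset.sum_le_sum fun x' _ => ?_
        by_cases hc : cond x' y
        · rw [if_pos hc, mul_one]
          have h1 := hcond x' y hc
          calc (∑ x, P x * Wn x y) * P x' ≤ (ε * Wn x' y) * P x' :=
                mul_le_mul_of_nonneg_right h1 (hP0 x')
          _ = ε * (P x' * Wn x' y) := by ring
        · rw [if_neg hc, mul_zero, mul_zero]
          exact mul_nonneg hε (mul_nonneg (hP0 x') (hWnn x' y))
      calc ∑ y : B, (∑ x, P x * Wn x y) * (∑ x', P x' * if cond x' y then (1:ℝ) else 0)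
          ≤ ∑ y : B, ∑ x', ε * (P x' * Wn x' y) := Finset.sum_le_sum fun y _ => step1 y
        _ = ε := by
            rw [Finset.sum_comm]
            have h2 : ∀ x' : A, ∑ y : B, ε * (P x' * Wn x' y) = ε * P x' := by
              intro x'
              rw [← Finset.mul_sum]
              congr 1
              rw [← Finset.mul_sum, hW1, mul_one]
            rw [Finset.sum_congr rfl fun x' _ => h2 x', ← Finset.mul_sum, hP1, mul_one]
    have hAm : ∀ m : Fin M,
        ∑ f : Fin M → A, Q f * (∑ y, if ¬ cond (f m) y then Wn (f m) y else 0) = Abar := by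
      intro m
      rw [expect_one P hP1 m (fun x => ∑ y, if ¬ cond x y then Wn x y else 0), hAbar]
      refine Finset.sum_congr rfl fun x _ => ?_
      rw [Finset.mul_sum]
      refine Finset.sum_congr rfl fun y _ => ?_
      by_cases hc : cond x y <;> simp [hc]
    calc ∑ f : Fin M → A, Q f * err f
        ≤ ∑ f : Fin M → A, ∑ m : Fin M,
            (Q f * (∑ y, if ¬ cond (f m) y then Wn (f m) y else 0)
              + ∑ m' ∈ Finset.univ.erase m,
                  Q f * (∑ y, if cond (f m') y then Wn (f m) y else 0)) := by
          refine Finset.sum_le_sum fun f _ => ?_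
          show Q f * (∑ m, ∑ y, (if φf f y ≠ m then Wn (f m) y else 0)) ≤ _
          rw [Finset.mul_sum]
          refine Finset.sum_le_sum fun m _ => ?_
          have hy : (∑ y, if φf f y ≠ m then Wn (f m) y else 0)
              ≤ (∑ y, if ¬ cond (f m) y then Wn (f m) y else 0)
                + ∑ m' ∈ Finset.univ.erase m, ∑ y, (if cond (f m') y then Wn (f m) y else 0) := by
            calc ∑ y, (if φf f y ≠ m then Wn (f m) y else 0)
                ≤ ∑ y, ((if ¬ cond (f m) y then Wn (f m) y else 0)
                    + ∑ m' ∈ Finset.univ.erase m, (if cond (f m') y then Wn (f m) y else 0)) :=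
                  Finset.sum_le_sum fun y _ => hpt f m y
              _ = _ := by rw [Finset.sum_add_distrib, Finset.sum_comm]
          calc Q f * (∑ y, if φf f y ≠ m then Wn (f m) y else 0)
              ≤ Q f * ((∑ y, if ¬ cond (f m) y then Wn (f m) y else 0)
                  + ∑ m' ∈ Finset.univ.erase m, ∑ y, (if cond (f m') y then Wn (f m) y else 0)) :=
                mul_le_mul_of_nonneg_left hy (hQ0 f)
            _ = _ := by rw [mul_add]; congr 1; exact Finset.mul_sum _ _ _
      _ = ∑ m : Fin M, ((∑ f : Fin M → A, Q f * (∑ y, if ¬ cond (f m) y then Wn (f m) y else 0))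
            + ∑ m' ∈ Finset.univ.erase m, ∑ f : Fin M → A,
                Q f * (∑ y, if cond (f m') y then Wn (f m) y else 0)) := by
          rw [Finset.sum_comm]
          refine Finset.sum_congr rfl fun m _ => ?_
          rw [Finset.sum_add_distrib]
          congr 1
          exact Finset.sum_comm
      _ ≤ ∑ m : Fin M, (Abar + ∑ m' ∈ Finset.univ.erase m, ε) := by
          refine Finset.sum_le_sum fun m _ => ?_
          refine add_le_add (le_of_eq (hAm m)) ?_
          exact Finset.sum_le_sum fun m' hm' =>
            hBbar m m' (Ne.symm (Finset.ne_of_mem_erase hm'))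
      _ ≤ (M : ℝ) * (Abar + (M : ℝ) * ε) := by
          have hcard : ∀ m : Fin M, (Finset.univ.erase m).card = M - 1 := by
            intro m
            rw [Finset.card_erase_of_mem (Finset.mem_univ m), Finset.card_univ,
              Fintype.card_fin]
          have hone : ∀ m : Fin M, ∑ m' ∈ Finset.univ.erase m, ε ≤ (M : ℝ) * ε := by
            intro m
            rw [Finset.sum_const, hcard m, nsmul_eq_mul]
            exact mul_le_mul_of_nonneg_right (by exact_mod_cast Nat.sub_le M 1) hε
          calc ∑ m : Fin M, (Abar + ∑ m' ∈ Finset.univ.erase m, ε)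
              ≤ ∑ _m : Fin M, (Abar + (M : ℝ) * ε) :=
                Finset.sum_le_sum fun m _ => add_le_add le_rfl (hone m)
            _ = (M : ℝ) * (Abar + (M : ℝ) * ε) := by
                rw [Finset.sum_const, Finset.card_univ, Fintype.card_fin, nsmul_eq_mul]
  obtain ⟨f, hf⟩ := exists_le_of_avg Q err hQ0 hQ1 _ hexp
  refine ⟨f, φf f, ?_⟩
  have hM' : (0:ℝ) < (M : ℝ) := by exact_mod_cast hM
  have : (1 / (M : ℝ)) * err f ≤ (1 / (M : ℝ)) * ((M : ℝ) * (Abar + (M : ℝ) * ε)) :=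
    mul_le_mul_of_nonneg_left hf (by positivity)
  rw [← mul_assoc, one_div_mul_cancel hM'.ne', one_mul] at this
  exact this

theorem channel_coding_direct_part
    {𝒳 𝒴 : Type*} [Fintype 𝒳] [Fintype 𝒴] [Nonempty 𝒳] [Nonempty 𝒴]
    (W : (n : ℕ) → (Fin n → 𝒳) → (Fin n → 𝒴) → ℝ)
    (hWnn : ∀ n x y, 0 ≤ W n x y) (hW1 : ∀ n x, ∑ y : Fin n → 𝒴, W n x y = 1)
    (R : ℝ) (hR0 : 0 < R) (hRC : R < capacity W) :
    ∃ f : (n : ℕ) → Fin ⌈Real.exp ((n : ℝ) * R)⌉₊ → (Fin n → 𝒳),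
    ∃ φ : (n : ℕ) → (Fin n → 𝒴) → Fin ⌈Real.exp ((n : ℝ) * R)⌉₊,
      Tendsto (fun n : ℕ =>
          (1 / (⌈Real.exp ((n : ℝ) * R)⌉₊ : ℝ)) *
            ∑ m : Fin ⌈Real.exp ((n : ℝ) * R)⌉₊, ∑ y : Fin n → 𝒴,
              (if φ n y ≠ m then W n (f n m) y else 0))
        atTop (nhds 0) := by
  -- extract a source `P` and a rate `β` with `R < β` achievable
  have hcapS : {I : ℝ | ∃ P : (n : ℕ) → (Fin n → 𝒳) → ℝ,
      (∀ n x, 0 ≤ P n x) ∧ (∀ n, ∑ x : Fin n → 𝒳, P n x = 1) ∧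
      I = specInfMutualInfo P W}.Nonempty := by
    by_contra h
    rw [Set.not_nonempty_iff_eq_empty] at h
    rw [capacity, h, Real.sSup_empty] at hRC
    linarith
  obtain ⟨I, hI, hRI⟩ := exists_lt_of_lt_csSup hcapS hRC
  obtain ⟨P, hP0, hP1, hIeq⟩ := hI
  rw [hIeq, specInfMutualInfo] at hRI
  have hTne : {β : ℝ | Tendsto (fun n => prInfDensityLT P W β n) atTop (nhds 0)}.Nonempty := by
    by_contra h
    rw [Set.not_nonempty_iff_eq_empty] at h
    rw [h, Real.sSup_empty] at hRI
    linarith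
  obtain ⟨β, hβ, hRβ⟩ := exists_lt_of_lt_csSup hTne hRI
  simp only [Set.mem_setOf_eq] at hβ
  set c : ℝ := (R + β) / 2 with hc
  have hRc : R < c := by rw [hc]; linarith
  have hcβ : c < β := by rw [hc]; linarith
  have hc0 : 0 < c := lt_trans hR0 hRc
  -- per-n code construction
  have hcode : ∀ n : ℕ, ∃ f : Fin ⌈Real.exp ((n : ℝ) * R)⌉₊ → (Fin n → 𝒳),
      ∃ φ : (Fin n → 𝒴) → Fin ⌈Real.exp ((n : ℝ) * R)⌉₊,
      (1 / (⌈Real.exp ((n : ℝ) * R)⌉₊ : ℝ)) *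
          ∑ m : Fin ⌈Real.exp ((n : ℝ) * R)⌉₊, ∑ y : Fin n → 𝒴,
            (if φ y ≠ m then W n (f m) y else 0)
        ≤ prInfDensityLT P W β n
            + (Real.exp ((n : ℝ) * (R - c)) + Real.exp (-(n : ℝ) * c)) := by
    intro n
    have hMpos : 0 < ⌈Real.exp ((n : ℝ) * R)⌉₊ := Nat.ceil_pos.mpr (Real.exp_pos _)
    have hPYnn : ∀ y : Fin n → 𝒴, 0 ≤ ∑ x' : Fin n → 𝒳, P n x' * W n x' y :=
      fun y => Finset.sum_nonneg fun x' _ => mul_nonneg (hP0 n x') (hWnn n x' y)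
    obtain ⟨f, φ, hfφ⟩ := exists_good_code ⌈Real.exp ((n : ℝ) * R)⌉₊ hMpos (W n)
      (hWnn n) (hW1 n) (P n) (hP0 n) (hP1 n)
      (fun x y => c < (1 / (n : ℝ)) *
        Real.log (W n x y / ∑ x' : Fin n → 𝒳, P n x' * W n x' y))
      (Real.exp (-(n : ℝ) * c)) (Real.exp_pos _).le
      (by
        intro x y hcnd
        set PY : ℝ := ∑ x' : Fin n → 𝒳, P n x' * W n x' y with hPY
        rcases Nat.eq_zero_or_pos n with h0 | hpos
        · exfalso
          subst h0
          norm_num at hcnd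
          linarith
        · have hnR : (0:ℝ) < (n : ℝ) := by exact_mod_cast hpos
          rw [one_div_mul_eq_div] at hcnd
          have hlog : (n : ℝ) * c < Real.log (W n x y / PY) := by
            have := (lt_div_iff₀ hnR).1 hcnd
            linarith [this]
          have hnc0 : 0 < (n : ℝ) * c := mul_pos hnR hc0
          have hratio1 : 1 < W n x y / PY := by
            by_contra hle
            push_neg at hle
            have h0' : 0 ≤ W n x y / PY := div_nonneg (hWnn n x y) (hPYnn y)
            have := Real.log_nonpos h0' hle
            linarith
          have hPYpos : 0 < PY := by
            rcases lt_or_eq_of_le (hPYnn y) with h | h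
            · exact h
            · exfalso
              have hPY0 : PY = 0 := by rw [hPY, ← h]
              rw [hPY0, div_zero] at hratio1; linarith
          have hexp : Real.exp ((n : ℝ) * c) < W n x y / PY := by
            have := Real.exp_lt_exp.2 hlog
            rwa [Real.exp_log (by positivity)] at this
          have hmul : Real.exp ((n : ℝ) * c) * PY < W n x y := (lt_div_iff₀ hPYpos).1 hexp
          calc PY = Real.exp (-(n : ℝ) * c) * (Real.exp ((n : ℝ) * c) * PY) := by
                rw [← mul_assoc, ← Real.exp_add, neg_mul, neg_add_cancel, Real.exp_zero, one_mul]
            _ ≤ Real.exp (-(n : ℝ) * c) * W n x y :=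
                mul_le_mul_of_nonneg_left hmul.le (Real.exp_pos _).le)
    refine ⟨f, φ, hfφ.trans (add_le_add ?_ ?_)⟩
    · -- first term ≤ prInfDensityLT
      rw [prInfDensityLT]
      refine Finset.sum_le_sum fun x _ => Finset.sum_le_sum fun y _ => ?_
      by_cases hcnd : c < (1 / (n : ℝ)) *
          Real.log (W n x y / ∑ x' : Fin n → 𝒳, P n x' * W n x' y)
      · rw [if_neg (not_not.2 hcnd)]
        split
        · exact mul_nonneg (hP0 n x) (hWnn n x y)
        · exact le_rfl
      · rw [if_pos hcnd]
        rw [if_pos (by push_neg at hcnd; linarith)]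
    · -- second term: M ε ≤ exp(n(R-c)) + exp(-nc)
      have hceil : (⌈Real.exp ((n : ℝ) * R)⌉₊ : ℝ) ≤ Real.exp ((n : ℝ) * R) + 1 :=
        (Nat.ceil_lt_add_one (Real.exp_pos _).le).le
      calc (⌈Real.exp ((n : ℝ) * R)⌉₊ : ℝ) * Real.exp (-(n : ℝ) * c)
          ≤ (Real.exp ((n : ℝ) * R) + 1) * Real.exp (-(n : ℝ) * c) :=
            mul_le_mul_of_nonneg_right hceil (Real.exp_pos _).le
        _ = Real.exp ((n : ℝ) * (R - c)) + Real.exp (-(n : ℝ) * c) := by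
            rw [add_mul, one_mul, ← Real.exp_add]
            congr 2
            ring
  choose f φ hfφ using hcode
  refine ⟨f, φ, ?_⟩
  have hupper : Tendsto (fun n : ℕ => prInfDensityLT P W β n
      + (Real.exp ((n : ℝ) * (R - c)) + Real.exp (-(n : ℝ) * c))) atTop (nhds 0) := by
    have h1 : Tendsto (fun n : ℕ => Real.exp ((n : ℝ) * (R - c))) atTop (nhds 0) :=
      Real.tendsto_exp_atBot.comp
        (Tendsto.atTop_mul_const_of_neg (by linarith : R - c < 0) tendsto_natCast_atTop_atTop)
    have h2 : Tendsto (fun n : ℕ => Real.exp (-(n : ℝ) * c)) atTop (nhds 0) := by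
      have ht : Tendsto (fun n : ℕ => -(n : ℝ) * c) atTop atBot := by
        have := Tendsto.atTop_mul_const_of_neg (by linarith : -c < 0)
          (tendsto_natCast_atTop_atTop (R := ℝ))
        simpa [mul_neg, neg_mul] using this
      exact Real.tendsto_exp_atBot.comp ht
    simpa using hβ.add (h1.add h2)
  refine tendsto_of_tendsto_of_tendsto_of_le_of_le tendsto_const_nhds hupper ?_ ?_
  · intro n
    refine mul_nonneg (by positivity) ?_
    refine Finset.sum_nonneg fun m _ => Finset.sum_nonneg fun y _ => ?_
    split
    · exact hWnn n _ y
    · exact le_rfl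
  · exact hfφ
end
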